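/- arXiv:2402.08746 — 10 statements merged into one kernel-verified Lean document; each statement's English description precedes it below -/
import Mathlib

section
/- Any strongly group-strategyproof and unanimous multi-winner approval-based voting rule is Pareto-efficient. -/
/-- Hamming distance between finite sets. -/
def hd {A : Type*} [DecidableEq A] (Q T : Finset A) : ℕ :=
  (Q \ T).card + (T \ Q).card

/-- A rule is unanimous if whenever all agents report the same size-`k` set `S`,
the output is `S`. -/
def Unanimous {A ι : Type*} [DecidableEq A] (k : ℕ)
    (R : (ι → Finset A) → Finset A) : Prop :=
  ∀ S : Finset A, S.card = k → R (fun _ => S) = S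

/-- Strong group-strategyproofness: no coalition can misreport so that, measured
from the true ballots, no member is worse off and some member is strictly better off. -/
def StronglyGSP {A ι : Type*} [DecidableEq A] [DecidableEq ι]
    (R : (ι → Finset A) → Finset A) : Prop :=
  ∀ (P P' : ι → Finset A) (S : Finset ι),
    (∀ i, i ∉ S → P' i = P i) →
    ¬ ((∀ i ∈ S, hd (P i) (R P') ≤ hd (P i) (R P)) ∧
       (∃ i ∈ S, hd (P i) (R P') < hd (P i) (R P)))

/-- Pareto-efficiency: no size-`k` committee weakly improves every agent and
strictly improves some agent, compared to the rule's outcome. -/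
def ParetoEfficient {A ι : Type*} [DecidableEq A] (k : ℕ)
    (R : (ι → Finset A) → Finset A) : Prop :=
  ∀ P : ι → Finset A,
    ¬ ∃ K' : Finset A, K'.card = k ∧
      (∀ i, hd (P i) K' ≤ hd (P i) (R P)) ∧
      (∃ i, hd (P i) K' < hd (P i) (R P))

/-- Any strongly GSP and unanimous multi-winner approval-based voting rule is
Pareto-efficient. -/
theorem sgsp_unanimous_implies_pareto {A : Type*} [Fintype A] [DecidableEq A]
    {n k : ℕ} (R : (Fin n → Finset A) → Finset A)
    (hcard : ∀ P, (R P).card = k)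
    (hU : Unanimous k R) (hGSP : StronglyGSP R) :
    ParetoEfficient k R := by
  intro P ⟨K', hK', hle, i, hi⟩
  have hR : R (fun _ => K') = K' := hU K' hK'
  exact hGSP P (fun _ => K') Finset.univ
    (fun j hj => absurd (Finset.mem_univ j) hj)
    ⟨fun j _ => by rw [hR]; exact hle j, i, Finset.mem_univ i, by rw [hR]; exact hi⟩
end

section
/- Let R be a Pareto-efficient multi-winner approval-based voting rule for elections with alternative set A' = A ∪ D (D a set of k−1 dummy alternatives disjoint from A) and committees of size k. Consider approval profiles produced from a ranking profile ≻ on A by the construction in which each agent i of the ranking election is replaced by agents (i,1),…,(i,m−1), where |A| = m and agent (i,j) approves the top j alternatives of ≻_i together with all of D. Then the committee R(P(≻)) contains all of D and exactly one alternative of A; i.e., R(P(≻)) \ D is a singleton. -/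
/-- The set of `k-1` dummy alternatives inside `Fin m ⊕ Fin (k-1)`. -/
def dummies (m k : ℕ) : Finset (Fin m ⊕ Fin (k - 1)) :=
  Finset.univ.image Sum.inr

/-- The approval profile constructed from a ranking profile `σ`, where `σ i t`
is the alternative ranked at position `t` by agent `i` (position `0` is the top).
Agent `(i, j)` (for `j : Fin (m-1)`, representing the index `j+1 ∈ [m-1]`)
approves the top `j+1` alternatives of `σ i` together with all dummies. -/
def redProfile {n m k : ℕ} (σ : Fin n → Equiv.Perm (Fin m)) :
    (Fin n × Fin (m - 1)) → Finset (Fin m ⊕ Fin (k - 1)) :=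
  fun p =>
    ((Finset.univ.filter (fun t : Fin m => t.val ≤ p.2.val)).image
        (fun t => Sum.inl (σ p.1 t))) ∪ dummies m k

/-- Auxiliary: the "top" part (real alternatives) of agent `p`'s ballot. -/
def tops {n m : ℕ} (k : ℕ) (σ : Fin n → Equiv.Perm (Fin m)) (p : Fin n × Fin (m - 1)) :
    Finset (Fin m ⊕ Fin (k - 1)) :=
  (Finset.univ.filter (fun t : Fin m => t.val ≤ p.2.val)).image (fun t => Sum.inl (σ p.1 t))

/-- For a Pareto-efficient rule `R` on the constructed approval election, the
outcome on `redProfile σ` contains all dummies together with exactly one real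
alternative. -/
theorem reduction_outcome_singleton {n m k : ℕ} (hn : 1 ≤ n) (hm : 2 ≤ m) (hk : 1 ≤ k)
    (R : ((Fin n × Fin (m - 1)) → Finset (Fin m ⊕ Fin (k - 1))) → Finset (Fin m ⊕ Fin (k - 1)))
    (hcard : ∀ P, (R P).card = k)
    (hPE : ParetoEfficient k R) :
    ∀ σ : Fin n → Equiv.Perm (Fin m),
      ∃ a : Fin m, R (redProfile σ) = insert (Sum.inl a) (dummies m k) := by
  intro σ
  classical
  set P := redProfile (k := k) σ with hPdef
  set K := R P with hKdef
  have hKcard : K.card = k := hcard P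
  set D := dummies m k with hDdef
  have hDcard : D.card = k - 1 := by
    rw [hDdef, dummies, Finset.card_image_of_injective _ Sum.inr_injective,
      Finset.card_univ, Fintype.card_fin]
  have hinl_not_D : ∀ a : Fin m, Sum.inl a ∉ D := by
    intro a ha
    simp [hDdef, dummies] at ha
  have hT_inl : ∀ (p : Fin n × Fin (m - 1)) (x : Fin m ⊕ Fin (k - 1)),
      x ∈ tops k σ p → x ∉ D := by
    intro p x hx
    simp only [tops, Finset.mem_image] at hx
    obtain ⟨t, -, rfl⟩ := hx
    exact hinl_not_D _
  have hTD : ∀ p, Disjoint (tops k σ p) D := by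
    intro p
    exact Finset.disjoint_left.mpr (fun {x} hx => hT_inl p x hx)
  have hPval : ∀ p, P p = tops k σ p ∪ D := fun p => rfl
  set KR := K \ D with hKRdef
  have hKsplit : KR.card + (K ∩ D).card = k := by
    have h := Finset.card_sdiff_add_card_inter K D
    rw [hKcard] at h
    exact h
  have hKDle : (K ∩ D).card ≤ k - 1 := by
    calc (K ∩ D).card ≤ D.card := Finset.card_le_card Finset.inter_subset_right
    _ = k - 1 := hDcard
  have hr1 : 1 ≤ KR.card := by omega
  -- the distinguished agent (i0, j0)
  have hm0 : 0 < m := by omega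
  set i0 : Fin n := ⟨0, hn⟩
  set j0 : Fin (m - 1) := ⟨0, by omega⟩
  set z : Fin m := ⟨0, hm0⟩
  set p0 : Fin n × Fin (m - 1) := (i0, j0) with hp0
  have hT0 : tops k σ p0 = {Sum.inl (σ i0 z)} := by
    ext x
    simp only [tops, Finset.mem_image, Finset.mem_filter, Finset.mem_univ, true_and,
      Finset.mem_singleton]
    constructor
    · rintro ⟨t, ht, rfl⟩
      have : t = z := Fin.ext (by simpa [hp0, j0] using ht)
      rw [this]
    · rintro rfl
      exact ⟨z, by simp [hp0, j0, z], rfl⟩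
  -- hamming distance identities
  have hdK' : ∀ (a : Fin m) (p : Fin n × Fin (m - 1)),
      hd (P p) (insert (Sum.inl a) D) + 2 * ((tops k σ p) ∩ {Sum.inl a}).card
        = (tops k σ p).card + 1 := by
    intro a p
    set T := tops k σ p with hTdef
    have e1 : (T ∪ D) \ insert (Sum.inl a) D = T \ {Sum.inl a} := by
      ext x
      simp only [Finset.mem_sdiff, Finset.mem_union, Finset.mem_insert,
        Finset.mem_singleton, not_or]
      have h := hT_inl p x
      tauto
    have e2 : insert (Sum.inl a) D \ (T ∪ D) = {Sum.inl a} \ T := by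
      ext x
      simp only [Finset.mem_sdiff, Finset.mem_union, Finset.mem_insert,
        Finset.mem_singleton, not_or]
      constructor
      · rintro ⟨hx | hx, hx2, hx3⟩
        · exact ⟨hx, hx2⟩
        · exact absurd hx hx3
      · rintro ⟨rfl, hx⟩
        exact ⟨Or.inl rfl, hx, hinl_not_D a⟩
    have c1 : (T \ {Sum.inl a}).card + (T ∩ {Sum.inl a}).card = T.card :=
      Finset.card_sdiff_add_card_inter T {Sum.inl a}
    have c2 : ({Sum.inl a} \ T).card + (({Sum.inl a} : Finset _) ∩ T).card = 1 := by
      have := Finset.card_sdiff_add_card_inter ({Sum.inl a} : Finset (Fin m ⊕ Fin (k-1))) T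
      simpa using this
    have c3 : (({Sum.inl a} : Finset _) ∩ T).card = (T ∩ {Sum.inl a}).card := by
      rw [Finset.inter_comm]
    rw [hPval p, hd, ← hTdef, e1, e2]
    omega
  have hdK : ∀ p : Fin n × Fin (m - 1),
      hd (P p) K + 2 * ((tops k σ p) ∩ KR).card + (K ∩ D).card
        = (tops k σ p).card + (k - 1) + KR.card := by
    intro p
    set T := tops k σ p with hTdef
    have e3 : (T ∪ D) \ K = (T \ K) ∪ (D \ K) := Finset.union_sdiff_distrib T D K
    have e3d : Disjoint (T \ K) (D \ K) :=
      (hTD p).mono Finset.sdiff_subset Finset.sdiff_subset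
    have e4 : K \ (T ∪ D) = KR \ T := by
      ext x
      simp only [hKRdef, Finset.mem_sdiff, Finset.mem_union, not_or]
      tauto
    have e5 : T ∩ K = T ∩ KR := by
      ext x
      simp only [hKRdef, Finset.mem_sdiff, Finset.mem_inter]
      have h := hT_inl p x
      tauto
    have c1 : (T \ K).card + (T ∩ KR).card = T.card := by
      rw [← e5]; exact Finset.card_sdiff_add_card_inter T K
    have c2 : (D \ K).card + (D ∩ K).card = k - 1 := by
      have h := Finset.card_sdiff_add_card_inter D K
      rw [hDcard] at h
      exact h
    have c2' : (D ∩ K).card = (K ∩ D).card := by rw [Finset.inter_comm]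
    have c3 : (KR \ T).card + (KR ∩ T).card = KR.card :=
      Finset.card_sdiff_add_card_inter KR T
    have c3' : (KR ∩ T).card = (T ∩ KR).card := by rw [Finset.inter_comm]
    rw [hPval p, hd, ← hTdef, e3, e4, Finset.card_union_of_disjoint e3d]
    omega
  -- combinatorial bound
  have hcomb : ∀ (a : Fin m), Sum.inl a ∈ KR → ∀ p : Fin n × Fin (m - 1),
      ((tops k σ p) ∩ KR).card ≤ ((tops k σ p) ∩ {Sum.inl a}).card + (KR.card - 1) := by
    intro a haKR p
    set T := tops k σ p with hTdef
    by_cases h : Sum.inl a ∈ T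
    · have e1 : (T ∩ {Sum.inl a}).card = 1 := by
        rw [Finset.inter_singleton_of_mem h]; simp
      have e2 : (T ∩ KR).card ≤ KR.card :=
        Finset.card_le_card Finset.inter_subset_right
      omega
    · have hsub : T ∩ KR ⊆ KR.erase (Sum.inl a) := by
        intro y hy
        rw [Finset.mem_inter] at hy
        refine Finset.mem_erase.mpr ⟨?_, hy.2⟩
        rintro rfl
        exact h hy.1
      have := Finset.card_le_card hsub
      rw [Finset.card_erase_of_mem haKR] at this
      omega
  rcases eq_or_lt_of_le hr1 with h1 | h2
  · -- KR is a singleton : done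
    obtain ⟨x, hx⟩ := Finset.card_eq_one.mp h1.symm
    have hxKR : x ∈ KR := by rw [hx]; exact Finset.mem_singleton_self x
    have hxK : x ∈ K := (Finset.mem_sdiff.mp hxKR).1
    have hxD : x ∉ D := (Finset.mem_sdiff.mp hxKR).2
    obtain ⟨a, rfl⟩ : ∃ a : Fin m, x = Sum.inl a := by
      cases x with
      | inl a => exact ⟨a, rfl⟩
      | inr c => exact absurd (by simp [hDdef, dummies]) hxD
    refine ⟨a, ?_⟩
    have hKD : K ∩ D = D := by
      apply Finset.eq_of_subset_of_card_le Finset.inter_subset_right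
      omega
    ext y
    simp only [Finset.mem_insert]
    constructor
    · intro hy
      by_cases hyD : y ∈ D
      · exact Or.inr hyD
      · left
        have : y ∈ KR := Finset.mem_sdiff.mpr ⟨hy, hyD⟩
        rw [hx] at this
        exact Finset.mem_singleton.mp this
    · rintro (rfl | hy)
      · exact hxK
      · have : y ∈ K ∩ D := by rw [hKD]; exact hy
        exact (Finset.mem_inter.mp this).1
  · -- KR has at least two elements : contradiction with Pareto efficiency
    exfalso
    obtain ⟨a, haKR, hachoice⟩ : ∃ a : Fin m, Sum.inl a ∈ KR ∧
        (Sum.inl (σ i0 z) ∈ KR → a = σ i0 z) := by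
      by_cases htop : Sum.inl (σ i0 z) ∈ KR
      · exact ⟨σ i0 z, htop, fun _ => rfl⟩
      · have hne : KR.Nonempty := Finset.card_pos.mp (by omega)
        obtain ⟨x, hx⟩ := hne
        obtain ⟨b, rfl⟩ : ∃ b : Fin m, x = Sum.inl b := by
          cases x with
          | inl b => exact ⟨b, rfl⟩
          | inr c => exact absurd (by simp [hDdef, dummies]) (Finset.mem_sdiff.mp hx).2
        exact ⟨b, hx, fun h => absurd h htop⟩
    apply hPE P
    refine ⟨insert (Sum.inl a) D, ?_, ?_, ⟨p0, ?_⟩⟩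
    · rw [Finset.card_insert_of_notMem (hinl_not_D a), hDcard]
      omega
    · intro p
      have h1 := hdK' a p
      have h2 := hdK p
      have h3 := hcomb a haKR p
      rw [← hKdef]
      omega
    · rw [← hKdef]
      have h1 := hdK' a p0
      have h2 := hdK p0
      have hele : ((tops k σ p0) ∩ {Sum.inl a}).card ≤ 1 := by
        calc ((tops k σ p0) ∩ {Sum.inl a}).card ≤ ({Sum.inl a} : Finset _).card :=
            Finset.card_le_card Finset.inter_subset_right
        _ = 1 := Finset.card_singleton _
      have ht0 : (tops k σ p0).card = 1 := by rw [hT0]; simp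
      by_cases htop : Sum.inl (σ i0 z) ∈ KR
      · have ha : a = σ i0 z := hachoice htop
        have he : ((tops k σ p0) ∩ {Sum.inl a}).card = 1 := by
          rw [hT0, ha]; simp
        have hc : ((tops k σ p0) ∩ KR).card = 1 := by
          rw [hT0, Finset.singleton_inter_of_mem htop]; simp
        omega
      · have hc : ((tops k σ p0) ∩ KR).card = 0 := by
          rw [hT0, Finset.singleton_inter_of_notMem htop]; simp
        omega
end

section
/- In the reduction from ranking-based elections to approval elections, if the underlying multi-winner approval rule R is strongly GSP and Pareto-efficient, then the induced single-winner ranking-based rule T (defined by T(≻) = the unique alternative in R(P(≻)) \ D) is onto: for every alternative a ∈ A there exists a ranking profile ≻ with T(≻) = a. -/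
/-- If `R` is strongly GSP and Pareto-efficient, the induced single-winner
ranking-based rule `T` (given by the unique real alternative in
`R (redProfile σ) \ D`) is onto: every alternative `a` is the output at some
ranking profile. -/
theorem induced_rule_onto {n m k : ℕ} (hn : 1 ≤ n) (hm : 2 ≤ m) (hk : 1 ≤ k)
    (R : ((Fin n × Fin (m - 1)) → Finset (Fin m ⊕ Fin (k - 1))) → Finset (Fin m ⊕ Fin (k - 1)))
    (hcard : ∀ P, (R P).card = k)
    (hGSP : StronglyGSP R) (hPE : ParetoEfficient k R) :
    ∀ a : Fin m, ∃ σ : Fin n → Equiv.Perm (Fin m),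
      R (redProfile σ) \ dummies m k = {Sum.inl a} := by
  intro a
  have hm1 : 0 < m - 1 := by omega
  set i0 : Fin m := ⟨0, by omega⟩ with hi0
  refine ⟨fun _ => Equiv.swap i0 a, ?_⟩
  set σ : Fin n → Equiv.Perm (Fin m) := fun _ => Equiv.swap i0 a with hσ
  set D := dummies m k with hD
  set K : Finset (Fin m ⊕ Fin (k - 1)) := insert (Sum.inl a) D with hK
  have haD : Sum.inl a ∉ D := by simp [hD, dummies]
  have hDcard : D.card = k - 1 := by
    rw [hD, dummies, Finset.card_image_of_injective _ Sum.inr_injective]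
    simp
  have hKcard : K.card = k := by
    rw [hK, Finset.card_insert_of_notMem haD, hDcard]; omega
  -- per-agent facts
  have hKB : ∀ p, K ⊆ redProfile σ p := by
    intro p
    rw [hK]
    apply Finset.insert_subset
    · apply Finset.mem_union_left
      refine Finset.mem_image.2 ⟨i0, ?_, ?_⟩
      · simp [hi0]
      · simp [hσ]
    · exact Finset.subset_union_right
  have hBcard : ∀ p : Fin n × Fin (m - 1), (redProfile (k := k) σ p).card = p.2.val + k := by
    intro p
    rw [redProfile, Finset.card_union_of_disjoint, hDcard,
      Finset.card_image_of_injective _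
        (fun x y h => (σ p.1).injective (Sum.inl_injective h))]
    · have : (Finset.univ.filter fun t : Fin m => t.val ≤ p.2.val)
          = Finset.Iic (⟨p.2.val, by omega⟩ : Fin m) := by
        ext t; simp [Fin.le_def]
      rw [this, Fin.card_Iic]
      simp only [Fin.val_mk]
      omega
    · rw [Finset.disjoint_left]
      intro x hx hx'
      simp only [Finset.mem_image] at hx
      obtain ⟨t, _, rfl⟩ := hx
      simp [hD, dummies] at hx'
  have hdK : ∀ p, hd (redProfile σ p) K = p.2.val := by
    intro p
    have h1 : K \ redProfile σ p = ∅ := Finset.sdiff_eq_empty_iff_subset.2 (hKB p)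
    rw [hd, h1, Finset.card_empty, Finset.card_sdiff_of_subset (hKB p), hBcard, hKcard]
    omega
  have hdlow : ∀ (p : Fin n × Fin (m - 1)) (Q : Finset (Fin m ⊕ Fin (k - 1))),
      Q.card = k → p.2.val ≤ hd (redProfile σ p) Q := by
    intro p Q hQ
    have := Finset.le_card_sdiff Q (redProfile σ p)
    rw [hBcard, hQ] at this
    rw [hd]
    omega
  -- the profile for agent (0,0) equals K
  set p0 : Fin n × Fin (m - 1) := (⟨0, by omega⟩, ⟨0, hm1⟩) with hp0
  have hB0 : redProfile σ p0 = K := by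
    symm
    apply Finset.eq_of_subset_of_card_le (hKB p0)
    rw [hBcard, hKcard]
    simp [hp0]
  have hRK : R (redProfile σ) = K := by
    by_contra hne
    apply hPE (redProfile σ)
    refine ⟨K, hKcard, ?_, ⟨p0, ?_⟩⟩
    · intro p
      rw [hdK]
      exact hdlow p _ (hcard _)
    · rw [hdK]
      simp only [hp0]
      have hpos : 0 < hd (redProfile σ p0) (R (redProfile σ)) := by
        rcases Nat.eq_zero_or_pos (hd (redProfile σ p0) (R (redProfile σ))) with h0 | h
        · exfalso
          apply hne
          rw [hd] at h0
          have h1 : redProfile σ p0 ⊆ R (redProfile σ) :=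
            Finset.sdiff_eq_empty_iff_subset.1 (Finset.card_eq_zero.1 (by omega))
          have h2 : R (redProfile σ) ⊆ redProfile σ p0 :=
            Finset.sdiff_eq_empty_iff_subset.1 (Finset.card_eq_zero.1 (by omega))
          rw [← hB0]
          exact Finset.Subset.antisymm h2 h1
        · exact h
      exact hpos
  rw [hRK, hK, Finset.insert_sdiff_of_notMem _ haD, Finset.sdiff_self]
  simp
end

section
/- In the reduction from ranking-based elections to approval elections, if the underlying multi-winner approval rule R is strongly GSP and Pareto-efficient, then the induced single-winner ranking-based rule T is strategyproof: no agent i of the ranking election can, by unilaterally misreporting her ranking, make T output an alternative she strictly prefers (ranks higher) than T's output under truthful reporting. -/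
lemma card_dummies (m k : ℕ) : (dummies m k).card = k - 1 := by
  rw [dummies, Finset.card_image_of_injective _ Sum.inr_injective, Finset.card_univ,
    Fintype.card_fin]

lemma inl_notMem_dummies {m k : ℕ} (x : Fin m) : Sum.inl x ∉ dummies m k := by
  simp [dummies]

lemma committee_eq {m k : ℕ} {K : Finset (Fin m ⊕ Fin (k-1))} {a : Fin m}
    (hcard : K.card = k) (h : K \ dummies m k = {Sum.inl a}) :
    K = insert (Sum.inl a) (dummies m k) := by
  have hint : (K ∩ dummies m k).card = k - 1 := by
    have h2 := Finset.card_sdiff_add_card_inter K (dummies m k)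
    rw [h, Finset.card_singleton, hcard] at h2
    have hk1 : 1 ≤ k := by
      have ha : Sum.inl a ∈ K := by
        have : Sum.inl a ∈ K \ dummies m k := by rw [h]; simp
        exact (Finset.mem_sdiff.mp this).1
      rw [← hcard]
      exact Finset.card_pos.mpr ⟨_, ha⟩
    omega
  have heq : K ∩ dummies m k = dummies m k :=
    Finset.eq_of_subset_of_card_le Finset.inter_subset_right (by rw [hint, card_dummies])
  have := Finset.sdiff_union_inter K (dummies m k)
  rw [h, heq] at this
  rw [← this, ← Finset.insert_eq]

lemma hd_singleton_union {A : Type*} [DecidableEq A] (S D : Finset A) (x : A)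
    (hS : ∀ y ∈ S, y ∉ D) (hx : x ∉ D) :
    hd (S ∪ D) (insert x D) = if x ∈ S then S.card - 1 else S.card + 1 := by
  have h1 : (S ∪ D) \ insert x D = S \ {x} := by
    ext y
    simp only [Finset.mem_sdiff, Finset.mem_union, Finset.mem_insert, Finset.mem_singleton,
      not_or]
    constructor
    · rintro ⟨hy | hy, hne, hnD⟩
      · exact ⟨hy, hne⟩
      · exact absurd hy hnD
    · rintro ⟨hy, hne⟩
      exact ⟨Or.inl hy, hne, hS y hy⟩
  have h2 : insert x D \ (S ∪ D) = {x} \ S := by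
    ext y
    simp only [Finset.mem_sdiff, Finset.mem_union, Finset.mem_insert, Finset.mem_singleton,
      not_or]
    constructor
    · rintro ⟨hy | hy, hnS, hnD⟩
      · exact ⟨hy, hnS⟩
      · exact absurd hy hnD
    · rintro ⟨rfl, hnS⟩
      exact ⟨Or.inl rfl, hnS, hx⟩
  rw [hd, h1, h2]
  by_cases hxS : x ∈ S
  · rw [if_pos hxS, Finset.card_sdiff_of_subset (Finset.singleton_subset_iff.mpr hxS),
      Finset.card_singleton, Finset.sdiff_eq_empty_iff_subset.mpr
        (Finset.singleton_subset_iff.mpr hxS), Finset.card_empty, add_zero]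
  · have hx1 : S \ {x} = S := by rw [← Finset.erase_eq]; exact Finset.erase_eq_of_notMem hxS
    have hx2 : ({x} : Finset A) \ S = {x} :=
      Finset.sdiff_eq_self_of_disjoint (by simpa using hxS)
    rw [if_neg hxS, hx1, hx2, Finset.card_singleton]

lemma hd_redProfile {n m k : ℕ} (σ : Fin n → Equiv.Perm (Fin m)) (i : Fin n)
    (j : Fin (m-1)) (x : Fin m) :
    hd (redProfile (k := k) σ (i, j)) (insert (Sum.inl x) (dummies m k)) =
      if ((σ i)⁻¹ x).val ≤ j.val then j.val else j.val + 2 := by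
  set T : Finset (Fin m ⊕ Fin (k-1)) :=
    (Finset.univ.filter (fun t : Fin m => t.val ≤ j.val)).image
      (fun t => Sum.inl (σ i t)) with hT
  have hjm : j.val < m := lt_of_lt_of_le j.isLt (Nat.sub_le m 1)
  have hcardT : T.card = j.val + 1 := by
    rw [hT, Finset.card_image_of_injective _
      (fun a b hab => (σ i).injective (Sum.inl_injective hab))]
    have : Finset.univ.filter (fun t : Fin m => t.val ≤ j.val)
        = Finset.Iic (⟨j.val, hjm⟩ : Fin m) := by
      ext t; simp [Fin.le_def]
    rw [this, Fin.card_Iic]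
  have hdisj : ∀ y ∈ T, y ∉ dummies m k := by
    intro y hy
    rw [hT] at hy
    simp only [Finset.mem_image] at hy
    obtain ⟨t, -, rfl⟩ := hy
    exact inl_notMem_dummies _
  have hmem : Sum.inl x ∈ T ↔ ((σ i)⁻¹ x).val ≤ j.val := by
    rw [hT]
    simp only [Finset.mem_image, Finset.mem_filter, Finset.mem_univ, true_and,
      Sum.inl.injEq]
    constructor
    · rintro ⟨t, ht, rfl⟩
      simpa using ht
    · intro h
      exact ⟨(σ i)⁻¹ x, h, by simp⟩
  have : redProfile (k := k) σ (i, j) = T ∪ dummies m k := rfl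
  rw [this, hd_singleton_union T (dummies m k) _ hdisj (inl_notMem_dummies x), hcardT]
  by_cases h : ((σ i)⁻¹ x).val ≤ j.val
  · rw [if_pos (hmem.mpr h), if_pos h]
    omega
  · rw [if_neg (fun hc => h (hmem.mp hc)), if_neg h]

/-- If `R` is strongly GSP and Pareto-efficient, the induced single-winner
ranking-based rule `T` is strategyproof: if agent `i` unilaterally misreports
her ranking (changing `σ` to `σ'`), the new winner `b` is not strictly preferred
by `i` (i.e. not ranked higher in `σ i`) to the truthful winner `a`.
Here `(σ i)⁻¹ x` is the position of alternative `x` in agent `i`'s true ranking,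
position `0` being the top. -/
theorem induced_rule_strategyproof {n m k : ℕ} (hn : 1 ≤ n) (hm : 2 ≤ m) (hk : 1 ≤ k)
    (R : ((Fin n × Fin (m - 1)) → Finset (Fin m ⊕ Fin (k - 1))) → Finset (Fin m ⊕ Fin (k - 1)))
    (hcard : ∀ P, (R P).card = k)
    (hGSP : StronglyGSP R) (hPE : ParetoEfficient k R) :
    ∀ (σ σ' : Fin n → Equiv.Perm (Fin m)) (i : Fin n),
      (∀ i', i' ≠ i → σ' i' = σ i') →
      ∀ a b : Fin m,
        R (redProfile σ) \ dummies m k = {Sum.inl a} →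
        R (redProfile σ') \ dummies m k = {Sum.inl b} →
        (σ i)⁻¹ a ≤ (σ i)⁻¹ b := by
  intro σ σ' i hσ' a b ha hb
  by_contra hab
  rw [not_le] at hab
  have hba : ((σ i)⁻¹ b).val < ((σ i)⁻¹ a).val := Fin.lt_def.mp hab
  have hRa := committee_eq (hcard (redProfile σ)) ha
  have hRb := committee_eq (hcard (redProfile σ')) hb
  set S : Finset (Fin n × Fin (m-1)) := Finset.univ.filter (fun p => p.1 = i) with hS
  refine hGSP (redProfile σ) (redProfile σ') S ?_ ⟨?_, ?_⟩
  · intro p hp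
    have hpne : p.1 ≠ i := by simpa [hS] using hp
    simp only [redProfile, hσ' p.1 hpne]
  · rintro ⟨p1, p2⟩ hp
    have hpi : p1 = i := by simpa [hS] using hp
    subst hpi
    rw [hRa, hRb, hd_redProfile, hd_redProfile]
    split_ifs <;> omega
  · have hbm : ((σ i)⁻¹ b).val < m - 1 := by
      have := ((σ i)⁻¹ a).isLt
      omega
    refine ⟨(i, ⟨((σ i)⁻¹ b).val, hbm⟩), by simp [hS], ?_⟩
    rw [hRa, hRb, hd_redProfile, hd_redProfile]
    rw [if_pos le_rfl, if_neg (by simp; omega)]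
    omega
end

section
/- For approval elections with m ≥ 3 alternatives and committee size k ∈ {1,…,m−2}, no multi-winner approval-based voting rule is both strongly group-strategyproof and Pareto-efficient. -/
lemma hd_id {A : Type*} [DecidableEq A] (Q T : Finset A) :
    hd Q T + 2*(Q∩T).card = Q.card + T.card := by
  have h1 := Finset.card_sdiff_add_card_inter Q T
  have h2 := Finset.card_sdiff_add_card_inter T Q
  rw [Finset.inter_comm T Q] at h2
  unfold hd; omega

lemma hd_single_mem {A : Type*} [DecidableEq A] {t : Finset A} {x : A} (h : x ∈ t) :
    hd t {x} = t.card - 1 := by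
  unfold hd
  rw [Finset.sdiff_singleton_eq_erase, Finset.card_erase_of_mem h,
    Finset.sdiff_eq_empty_iff_subset.mpr (Finset.singleton_subset_iff.mpr h)]
  simp

lemma hd_single_not {A : Type*} [DecidableEq A] {t : Finset A} {x : A} (h : x ∉ t) :
    hd t {x} = t.card + 1 := by
  unfold hd
  rw [Finset.sdiff_singleton_eq_erase, Finset.erase_eq_of_notMem h]
  have : {x} \ t = {x} := by
    ext z; simp; rintro rfl; exact fun hz => h hz
  rw [this]; simp

lemma hd_union_eq {A : Type*} [DecidableEq A] {B t s : Finset A}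
    (h1 : Disjoint B t) (h2 : Disjoint B s) :
    hd (B ∪ t) (B ∪ s) = hd t s := by
  have e1 : (B ∪ t) \ (B ∪ s) = t \ s := by
    ext z
    simp only [Finset.mem_sdiff, Finset.mem_union, not_or]
    have := fun hz : z ∈ B => Finset.disjoint_left.mp h1 hz
    tauto
  have e2 : (B ∪ s) \ (B ∪ t) = s \ t := by
    ext z
    simp only [Finset.mem_sdiff, Finset.mem_union, not_or]
    have := fun hz : z ∈ B => Finset.disjoint_left.mp h2 hz
    tauto
  unfold hd; rw [e1, e2]

lemma hd_pair_le {A : Type*} [DecidableEq A] {B t : Finset A} {x y : A}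
    (hBt : Disjoint B t) (hx : x ∉ B) (hy : y ∉ B) (h : y ∈ t → x ∈ t) :
    hd (B ∪ t) (B ∪ {x}) ≤ hd (B ∪ t) (B ∪ {y}) := by
  rw [hd_union_eq hBt (Finset.disjoint_singleton_right.mpr hx),
      hd_union_eq hBt (Finset.disjoint_singleton_right.mpr hy)]
  by_cases hxt : x ∈ t
  · have h1 := hd_single_mem hxt
    by_cases hyt : y ∈ t
    · rw [h1, hd_single_mem hyt]
    · rw [h1, hd_single_not hyt]; omega
  · have hyt : y ∉ t := fun hy' => hxt (h hy')
    rw [hd_single_not hxt, hd_single_not hyt]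

lemma hd_pair_lt {A : Type*} [DecidableEq A] {B t : Finset A} {x y : A}
    (hBt : Disjoint B t) (hx : x ∉ B) (hy : y ∉ B) (hxt : x ∈ t) (hyt : y ∉ t) :
    hd (B ∪ t) (B ∪ {x}) < hd (B ∪ t) (B ∪ {y}) := by
  rw [hd_union_eq hBt (Finset.disjoint_singleton_right.mpr hx),
      hd_union_eq hBt (Finset.disjoint_singleton_right.mpr hy),
      hd_single_mem hxt, hd_single_not hyt]
  omega

lemma card_swap {A : Type*} [DecidableEq A] {K : Finset A} {d e : A}
    (hd' : d ∈ K) (he : e ∉ K) : (insert e (K.erase d)).card = K.card := by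
  rw [Finset.card_insert_of_notMem (fun h => he (Finset.mem_of_mem_erase h)),
      Finset.card_erase_of_mem hd']
  have : 1 ≤ K.card := Finset.card_pos.mpr ⟨d, hd'⟩
  omega

lemma inter_swap {A : Type*} [DecidableEq A] (P : Finset A) {K : Finset A} {d e : A}
    (hdK : d ∈ K) (he : e ∉ K) :
    (P ∩ insert e (K.erase d)).card + (if d ∈ P then 1 else 0)
      = (P ∩ K).card + (if e ∈ P then 1 else 0) := by
  rw [Finset.inter_comm P, Finset.inter_comm P K]
  have h1 : ((K ∩ P).erase d).card + (if d ∈ P then 1 else 0) = (K ∩ P).card := by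
    by_cases hdP : d ∈ P
    · have hm : d ∈ K ∩ P := Finset.mem_inter.mpr ⟨hdK, hdP⟩
      rw [Finset.card_erase_of_mem hm]
      have : 1 ≤ (K ∩ P).card := Finset.card_pos.mpr ⟨d, hm⟩
      simp [hdP]; omega
    · rw [Finset.erase_eq_of_notMem (fun h => hdP (Finset.mem_of_mem_inter_right h))]
      simp [hdP]
  by_cases heP : e ∈ P
  · rw [Finset.insert_inter_of_mem heP, Finset.erase_inter,
      Finset.card_insert_of_notMem (fun h => he (Finset.mem_of_mem_inter_left (Finset.mem_of_mem_erase h)))]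
    simp [heP]; omega
  · rw [Finset.insert_inter_of_notMem heP, Finset.erase_inter]
    simp [heP]; omega

lemma swap_hd_le {A : Type*} [DecidableEq A] (P : Finset A) {K : Finset A} {d e : A}
    (hdK : d ∈ K) (he : e ∉ K) (h : d ∈ P → e ∈ P) :
    hd P (insert e (K.erase d)) ≤ hd P K := by
  have i1 := hd_id P K
  have i2 := hd_id P (insert e (K.erase d))
  have cs := card_swap hdK he
  have is := inter_swap P hdK he
  split_ifs at is with h1 h2 h2
  · omega
  · exact absurd (h h1) h2
  · omega
  · omega

lemma swap_hd_lt {A : Type*} [DecidableEq A] (P : Finset A) {K : Finset A} {d e : A}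
    (hdK : d ∈ K) (he : e ∉ K) (hdP : d ∉ P) (heP : e ∈ P) :
    hd P (insert e (K.erase d)) < hd P K := by
  have i1 := hd_id P K
  have i2 := hd_id P (insert e (K.erase d))
  have cs := card_swap hdK he
  have is := inter_swap P hdK he
  rw [if_neg hdP, if_pos heP] at is
  omega

def blk {n : ℕ} (i : Fin n) : Fin 3 :=
  if i.val = 0 then 0 else if i.val = 1 then 1 else 2

def rep {n : ℕ} (hn : 6 ≤ n) (j : Fin 3) : Fin n :=
  ⟨j.val, by omega⟩

lemma blk_rep {n : ℕ} (hn : 6 ≤ n) (j : Fin 3) : blk (rep hn j) = j := by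
  fin_cases j <;> rfl

def tri {α : Type*} (X Y Z : α) : Fin 3 → α :=
  fun v => if v.val = 0 then X else if v.val = 1 then Y else Z

lemma fin3_forall {P : Fin 3 → Prop} (h0 : P 0) (h1 : P 1) (h2 : P 2) : ∀ v, P v := by
  intro v; fin_cases v; exacts [h0, h1, h2]

lemma notMem_single {α : Type*} [DecidableEq α] {x y : α} (h : x ≠ y) :
    x ∉ ({y} : Finset α) := by simp [h]

lemma notMem_pair {α : Type*} [DecidableEq α] {x y z : α} (h1 : x ≠ y) (h2 : x ≠ z) :
    x ∉ ({y, z} : Finset α) := by simp [h1, h2]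

lemma finset_ne_of {α : Type*} {s t : Finset α} {z : α} (h1 : z ∈ s) (h2 : z ∉ t) :
    s ≠ t := fun h => h2 (h ▸ h1)

lemma sgsp_step {A : Type*} [DecidableEq A] {n : ℕ} (hn : 6 ≤ n)
    (R : (Fin n → Finset A) → Finset A) (hgsp : StronglyGSP R)
    (B : Finset A) (x x' : A)
    (τ τ' : Fin 3 → Finset A) (v' : Fin 3)
    (hdisj : ∀ j, Disjoint B (τ j))
    (hx : x ∉ B) (hx' : x' ∉ B)
    (hR : R (fun i => B ∪ τ (blk i)) = B ∪ {x})
    (hR' : R (fun i => B ∪ τ' (blk i)) = B ∪ {x'})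
    (hweak : ∀ j, (τ j ≠ τ' j ∨ j = v') → (x ∈ τ j → x' ∈ τ j))
    (hstrict : x' ∈ τ v' ∧ x ∉ τ v') : False := by
  set P : Fin n → Finset A := fun i => B ∪ τ (blk i) with hP
  set P' : Fin n → Finset A := fun i => B ∪ τ' (blk i) with hP'
  set S : Finset (Fin n) :=
    Finset.univ.filter (fun i => τ (blk i) ≠ τ' (blk i) ∨ blk i = v') with hS
  refine hgsp P P' S (fun i hi => ?_) ⟨fun i hi => ?_, ?_⟩
  · have h1 : ¬ (τ (blk i) ≠ τ' (blk i) ∨ blk i = v') := by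
      intro hor
      exact hi (Finset.mem_filter.mpr ⟨Finset.mem_univ i, hor⟩)
    push_neg at h1
    simp only [hP, hP', h1.1]
  · have hor := (Finset.mem_filter.mp hi).2
    rw [hR, hR']
    exact hd_pair_le (hdisj (blk i)) hx' hx (hweak (blk i) hor)
  · refine ⟨rep hn v', ?_, ?_⟩
    · exact Finset.mem_filter.mpr ⟨Finset.mem_univ _, Or.inr (blk_rep hn v')⟩
    · show hd (P (rep hn v')) (R P') < hd (P (rep hn v')) (R P)
      rw [hR, hR']
      show hd (B ∪ τ (blk (rep hn v'))) (B ∪ {x'}) <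
        hd (B ∪ τ (blk (rep hn v'))) (B ∪ {x})
      rw [blk_rep hn v']
      exact hd_pair_lt (hdisj v') hx' hx hstrict.1 hstrict.2

lemma structure_lemma {A : Type*} [DecidableEq A] {n k : ℕ}
    (R : (Fin n → Finset A) → Finset A)
    (hcard : ∀ P, (R P).card = k)
    (hpe : ParetoEfficient k R)
    {a b c : A} {B : Finset A}
    (hkB : B.card + 1 = k)
    (hdisjB : ∀ z ∈ B, z ∉ ({a,b,c} : Finset A))
    (hn0 : 0 < n)
    (t : Fin n → Finset A)
    (hsub : ∀ i, t i ⊆ ({a,b,c} : Finset A))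
    (hne : ∀ i, (t i).Nonempty)
    (hnc : ∀ x ∈ ({a,b,c} : Finset A), ∃ i, x ∉ t i) :
    ∃ x ∈ ({a,b,c} : Finset A), R (fun i => B ∪ t i) = B ∪ {x} ∧
      ∀ y ∈ ({a,b,c} : Finset A), (∀ i, x ∈ t i → y ∈ t i) →
        ¬ ∃ i, y ∈ t i ∧ x ∉ t i := by
  set P : Fin n → Finset A := fun i => B ∪ t i with hP
  set K := R P with hK
  have hKcard : K.card = k := hcard P
  have hdisj_t : ∀ i, Disjoint B (t i) :=
    fun i => Finset.disjoint_left.mpr (fun {z} hz hzt => hdisjB z hz (hsub i hzt))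
  have habc_notB : ∀ x ∈ ({a,b,c} : Finset A), x ∉ B :=
    fun x hx hxB => hdisjB x hxB hx
  have i0 : Fin n := ⟨0, hn0⟩
  -- Step 1 : B ⊆ K
  have hBK : B ⊆ K := by
    by_contra hnsub
    obtain ⟨e, heB, heK⟩ := Finset.not_subset.mp hnsub
    by_cases hex : ∃ d ∈ K, d ∉ B ∧ d ∉ ({a,b,c} : Finset A)
    · obtain ⟨d, hdK, hdB, hdabc⟩ := hex
      refine hpe P ⟨insert e (K.erase d), ?_, ?_, ⟨i0, ?_⟩⟩
      · rw [card_swap hdK heK]; exact hKcard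
      · intro i
        refine swap_hd_le (P i) hdK heK (fun hdP => absurd ?_ hdabc)
        rcases Finset.mem_union.mp hdP with h | h
        · exact absurd h hdB
        · exact hsub i h
      · refine swap_hd_lt (P i0) hdK heK ?_ (Finset.mem_union_left _ heB)
        intro hdP
        rcases Finset.mem_union.mp hdP with h | h
        · exact hdB h
        · exact hdabc (hsub i0 h)
    · push_neg at hex
      have hxK : ∃ x ∈ K, x ∈ ({a,b,c} : Finset A) := by
        by_contra hno
        push_neg at hno
        have hKB : K ⊆ B := fun z hz => by
          by_contra hzB
          exact hno z hz (hex z hz hzB)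
        have := Finset.card_le_card hKB
        omega
      obtain ⟨x, hxK, hxabc⟩ := hxK
      obtain ⟨j, hxj⟩ := hnc x hxabc
      refine hpe P ⟨insert e (K.erase x), ?_, ?_, ⟨j, ?_⟩⟩
      · rw [card_swap hxK heK]; exact hKcard
      · exact fun i => swap_hd_le (P i) hxK heK (fun _ => Finset.mem_union_left _ heB)
      · refine swap_hd_lt (P j) hxK heK ?_ (Finset.mem_union_left _ heB)
        intro hxP
        rcases Finset.mem_union.mp hxP with h | h
        · exact habc_notB x hxabc h
        · exact hxj h
  -- Step 2 : K = B ∪ {d}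
  have h1 : (K \ B).card = 1 := by
    rw [Finset.card_sdiff_of_subset hBK]; omega
  obtain ⟨d, hdset⟩ := Finset.card_eq_one.mp h1
  have hdKB : d ∈ K \ B := hdset ▸ Finset.mem_singleton_self d
  have hdK : d ∈ K := (Finset.mem_sdiff.mp hdKB).1
  have hdB : d ∉ B := (Finset.mem_sdiff.mp hdKB).2
  have hKeq : K = B ∪ {d} := by
    have h2 := Finset.union_sdiff_of_subset hBK
    rw [hdset] at h2
    exact h2.symm
  -- Step 3 : d ∈ {a,b,c}
  have hdabc : d ∈ ({a,b,c} : Finset A) := by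
    by_contra hdabc
    obtain ⟨x₀, hx₀⟩ := hne i0
    have hx₀abc := hsub i0 hx₀
    have hx₀K : x₀ ∉ K := by
      rw [hKeq]
      intro hmem
      rcases Finset.mem_union.mp hmem with h | h
      · exact habc_notB x₀ hx₀abc h
      · exact hdabc (Finset.mem_singleton.mp h ▸ hx₀abc)
    refine hpe P ⟨insert x₀ (K.erase d), ?_, ?_, ⟨i0, ?_⟩⟩
    · rw [card_swap hdK hx₀K]; exact hKcard
    · intro i
      refine swap_hd_le (P i) hdK hx₀K (fun hdP => absurd ?_ hdabc)
      rcases Finset.mem_union.mp hdP with h | h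
      · exact absurd h hdB
      · exact hsub i h
    · refine swap_hd_lt (P i0) hdK hx₀K ?_ (Finset.mem_union_right _ hx₀)
      intro hdP
      rcases Finset.mem_union.mp hdP with h | h
      · exact hdB h
      · exact hdabc (hsub i0 h)
  -- Conclusion
  refine ⟨d, hdabc, hKeq ▸ hK.symm ▸ rfl, ?_⟩
  rintro y hy hyall ⟨j, hyj, hdj⟩
  refine hpe P ⟨B ∪ {y}, ?_, ?_, ⟨j, ?_⟩⟩
  · rw [Finset.card_union_of_disjoint (Finset.disjoint_singleton_right.mpr (habc_notB y hy))]
    simpa using hkB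
  · intro i
    rw [← hK, hKeq]
    exact hd_pair_le (hdisj_t i) (habc_notB y hy) (habc_notB d hdabc) (hyall i)
  · rw [← hK, hKeq]
    exact hd_pair_lt (hdisj_t j) (habc_notB y hy) (habc_notB d hdabc) hyj hdj

lemma block_structure {A : Type*} [DecidableEq A] {n k : ℕ} (hn : 6 ≤ n)
    (R : (Fin n → Finset A) → Finset A)
    (hcard : ∀ P, (R P).card = k)
    (hpe : ParetoEfficient k R)
    {a b c : A} {B : Finset A}
    (hkB : B.card + 1 = k)
    (hdisjB : ∀ z ∈ B, z ∉ ({a,b,c} : Finset A))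
    (τ : Fin 3 → Finset A)
    (hsub : ∀ v, τ v ⊆ ({a,b,c} : Finset A))
    (hne : ∀ v, (τ v).Nonempty)
    (hnc : ∀ x ∈ ({a,b,c} : Finset A), ∃ v, x ∉ τ v) :
    ∃ x ∈ ({a,b,c} : Finset A), R (fun i => B ∪ τ (blk i)) = B ∪ {x} ∧
      ∀ y ∈ ({a,b,c} : Finset A), (∀ v, x ∈ τ v → y ∈ τ v) →
        ¬ ∃ v, y ∈ τ v ∧ x ∉ τ v := by
  obtain ⟨x, hx, hR, hund⟩ := structure_lemma R hcard hpe hkB hdisjB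
    (by omega : 0 < n) (fun i => τ (blk i)) (fun i => hsub (blk i))
    (fun i => hne (blk i))
    (fun y hy => by
      obtain ⟨v, hv⟩ := hnc y hy
      exact ⟨rep hn v, by show y ∉ τ (blk (rep hn v)); rw [blk_rep hn v]; exact hv⟩)
  refine ⟨x, hx, hR, ?_⟩
  rintro y hy hall ⟨v, hyv, hxv⟩
  refine hund y hy (fun i => hall (blk i)) ⟨rep hn v, ?_, ?_⟩
  · show y ∈ τ (blk (rep hn v)); rw [blk_rep hn v]; exact hyv
  · show x ∉ τ (blk (rep hn v)); rw [blk_rep hn v]; exact hxv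


set_option maxHeartbeats 4000000 in
/-- For approval elections with `m ≥ 3` alternatives and committee size
`1 ≤ k ≤ m - 2`, no multi-winner approval-based voting rule (on elections with
`n ≥ 6` agents) is both strongly GSP and Pareto-efficient. -/
theorem no_sgsp_pareto_rule {A : Type*} [Fintype A] [DecidableEq A]
    {m n k : ℕ} (hmA : Fintype.card A = m) (hm : 3 ≤ m)
    (hk1 : 1 ≤ k) (hk2 : k ≤ m - 2) (hn : 6 ≤ n) :
    ¬ ∃ R : (Fin n → Finset A) → Finset A,
        (∀ P, (R P).card = k) ∧ StronglyGSP R ∧ ParetoEfficient k R := by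
  rintro ⟨R, hcard, hgsp, hpe⟩
  have hcardA : 3 ≤ (Finset.univ : Finset A).card := by
    rw [Finset.card_univ, hmA]; exact hm
  obtain ⟨s, -, hs3⟩ := Finset.exists_subset_card_eq hcardA
  obtain ⟨a, b, c, hab, hac, hbc, hset⟩ := Finset.card_eq_three.mp hs3
  have hba : b ≠ a := hab.symm
  have hca : c ≠ a := hac.symm
  have hcb : c ≠ b := hbc.symm
  have habc_card : ({a, b, c} : Finset A).card = 3 := hset ▸ hs3
  have hsd : (Finset.univ \ ({a, b, c} : Finset A)).card = m - 3 := by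
    rw [Finset.card_sdiff_of_subset (Finset.subset_univ _), Finset.card_univ, hmA, habc_card]
  obtain ⟨B, hBsub, hBcard⟩ := Finset.exists_subset_card_eq
    (show k - 1 ≤ (Finset.univ \ ({a, b, c} : Finset A)).card by omega)
  have hdisjB : ∀ z ∈ B, z ∉ ({a, b, c} : Finset A) :=
    fun z hz => (Finset.mem_sdiff.mp (hBsub hz)).2
  have hkB : B.card + 1 = k := by omega
  have hdisjBIG : Disjoint B ({a, b, c} : Finset A) := Finset.disjoint_left.mpr hdisjB
  have haB : a ∉ B := fun h => hdisjB a h (by simp)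
  have hbB : b ∉ B := fun h => hdisjB b h (by simp)
  have hcB : c ∉ B := fun h => hdisjB c h (by simp)
  have hsub0 : ∀ v : Fin 3, (tri ({a, c} : Finset A) ({a, b} : Finset A) ({b} : Finset A)) v ⊆ ({a, b, c} : Finset A) :=
    fin3_forall (Finset.insert_subset_iff.mpr ⟨(Finset.mem_insert_self a {b, c}), Finset.singleton_subset_iff.mpr (Finset.mem_insert_of_mem (Finset.mem_insert_of_mem (Finset.mem_singleton_self c)))⟩) (Finset.insert_subset_iff.mpr ⟨(Finset.mem_insert_self a {b, c}), Finset.singleton_subset_iff.mpr (Finset.mem_insert_of_mem (Finset.mem_insert_self b {c}))⟩) (Finset.singleton_subset_iff.mpr (Finset.mem_insert_of_mem (Finset.mem_insert_self b {c})))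
  have hdisj0 : ∀ v, Disjoint B ((tri ({a, c} : Finset A) ({a, b} : Finset A) ({b} : Finset A)) v) := fun v => hdisjBIG.mono_right (hsub0 v)
  obtain ⟨x0, hxm0, hR0, hund0⟩ := block_structure hn R hcard hpe hkB hdisjB (tri ({a, c} : Finset A) ({a, b} : Finset A) ({b} : Finset A)) hsub0
    (fin3_forall (Finset.insert_nonempty _ _) (Finset.insert_nonempty _ _) (Finset.singleton_nonempty _))
    (by intro x hx
        simp only [Finset.mem_insert, Finset.mem_singleton] at hx
        rcases hx with rfl | rfl | rfl
        · exact ⟨2, (notMem_single hab)⟩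
        · exact ⟨0, (notMem_pair hba hbc)⟩
        · exact ⟨1, (notMem_pair hca hcb)⟩
        )
  have hval0 : x0 = a ∨ x0 = b ∨ x0 = c := by simpa using hxm0
  have hsub1 : ∀ v : Fin 3, (tri ({a, c} : Finset A) ({a, b} : Finset A) ({c} : Finset A)) v ⊆ ({a, b, c} : Finset A) :=
    fin3_forall (Finset.insert_subset_iff.mpr ⟨(Finset.mem_insert_self a {b, c}), Finset.singleton_subset_iff.mpr (Finset.mem_insert_of_mem (Finset.mem_insert_of_mem (Finset.mem_singleton_self c)))⟩) (Finset.insert_subset_iff.mpr ⟨(Finset.mem_insert_self a {b, c}), Finset.singleton_subset_iff.mpr (Finset.mem_insert_of_mem (Finset.mem_insert_self b {c}))⟩) (Finset.singleton_subset_iff.mpr (Finset.mem_insert_of_mem (Finset.mem_insert_of_mem (Finset.mem_singleton_self c))))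
  have hdisj1 : ∀ v, Disjoint B ((tri ({a, c} : Finset A) ({a, b} : Finset A) ({c} : Finset A)) v) := fun v => hdisjBIG.mono_right (hsub1 v)
  obtain ⟨x1, hxm1, hR1, hund1⟩ := block_structure hn R hcard hpe hkB hdisjB (tri ({a, c} : Finset A) ({a, b} : Finset A) ({c} : Finset A)) hsub1
    (fin3_forall (Finset.insert_nonempty _ _) (Finset.insert_nonempty _ _) (Finset.singleton_nonempty _))
    (by intro x hx
        simp only [Finset.mem_insert, Finset.mem_singleton] at hx
        rcases hx with rfl | rfl | rfl
        · exact ⟨2, (notMem_single hac)⟩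
        · exact ⟨0, (notMem_pair hba hbc)⟩
        · exact ⟨1, (notMem_pair hca hcb)⟩
        )
  have hval1 : x1 = a ∨ x1 = b ∨ x1 = c := by simpa using hxm1
  have hsub2 : ∀ v : Fin 3, (tri ({a, c} : Finset A) ({a, b} : Finset A) ({b, c} : Finset A)) v ⊆ ({a, b, c} : Finset A) :=
    fin3_forall (Finset.insert_subset_iff.mpr ⟨(Finset.mem_insert_self a {b, c}), Finset.singleton_subset_iff.mpr (Finset.mem_insert_of_mem (Finset.mem_insert_of_mem (Finset.mem_singleton_self c)))⟩) (Finset.insert_subset_iff.mpr ⟨(Finset.mem_insert_self a {b, c}), Finset.singleton_subset_iff.mpr (Finset.mem_insert_of_mem (Finset.mem_insert_self b {c}))⟩) (Finset.insert_subset_iff.mpr ⟨(Finset.mem_insert_of_mem (Finset.mem_insert_self b {c})), Finset.singleton_subset_iff.mpr (Finset.mem_insert_of_mem (Finset.mem_insert_of_mem (Finset.mem_singleton_self c)))⟩)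
  have hdisj2 : ∀ v, Disjoint B ((tri ({a, c} : Finset A) ({a, b} : Finset A) ({b, c} : Finset A)) v) := fun v => hdisjBIG.mono_right (hsub2 v)
  obtain ⟨x2, hxm2, hR2, hund2⟩ := block_structure hn R hcard hpe hkB hdisjB (tri ({a, c} : Finset A) ({a, b} : Finset A) ({b, c} : Finset A)) hsub2
    (fin3_forall (Finset.insert_nonempty _ _) (Finset.insert_nonempty _ _) (Finset.insert_nonempty _ _))
    (by intro x hx
        simp only [Finset.mem_insert, Finset.mem_singleton] at hx
        rcases hx with rfl | rfl | rfl
        · exact ⟨2, (notMem_pair hab hac)⟩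
        · exact ⟨0, (notMem_pair hba hbc)⟩
        · exact ⟨1, (notMem_pair hca hcb)⟩
        )
  have hval2 : x2 = a ∨ x2 = b ∨ x2 = c := by simpa using hxm2
  have hsub3 : ∀ v : Fin 3, (tri ({b, c} : Finset A) ({a} : Finset A) ({a, b} : Finset A)) v ⊆ ({a, b, c} : Finset A) :=
    fin3_forall (Finset.insert_subset_iff.mpr ⟨(Finset.mem_insert_of_mem (Finset.mem_insert_self b {c})), Finset.singleton_subset_iff.mpr (Finset.mem_insert_of_mem (Finset.mem_insert_of_mem (Finset.mem_singleton_self c)))⟩) (Finset.singleton_subset_iff.mpr (Finset.mem_insert_self a {b, c})) (Finset.insert_subset_iff.mpr ⟨(Finset.mem_insert_self a {b, c}), Finset.singleton_subset_iff.mpr (Finset.mem_insert_of_mem (Finset.mem_insert_self b {c}))⟩)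
  have hdisj3 : ∀ v, Disjoint B ((tri ({b, c} : Finset A) ({a} : Finset A) ({a, b} : Finset A)) v) := fun v => hdisjBIG.mono_right (hsub3 v)
  obtain ⟨x3, hxm3, hR3, hund3⟩ := block_structure hn R hcard hpe hkB hdisjB (tri ({b, c} : Finset A) ({a} : Finset A) ({a, b} : Finset A)) hsub3
    (fin3_forall (Finset.insert_nonempty _ _) (Finset.singleton_nonempty _) (Finset.insert_nonempty _ _))
    (by intro x hx
        simp only [Finset.mem_insert, Finset.mem_singleton] at hx
        rcases hx with rfl | rfl | rfl
        · exact ⟨0, (notMem_pair hab hac)⟩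
        · exact ⟨1, (notMem_single hba)⟩
        · exact ⟨1, (notMem_single hca)⟩
        )
  have hval3 : x3 = a ∨ x3 = b ∨ x3 = c := by simpa using hxm3
  have hsub4 : ∀ v : Fin 3, (tri ({b, c} : Finset A) ({a} : Finset A) ({a, c} : Finset A)) v ⊆ ({a, b, c} : Finset A) :=
    fin3_forall (Finset.insert_subset_iff.mpr ⟨(Finset.mem_insert_of_mem (Finset.mem_insert_self b {c})), Finset.singleton_subset_iff.mpr (Finset.mem_insert_of_mem (Finset.mem_insert_of_mem (Finset.mem_singleton_self c)))⟩) (Finset.singleton_subset_iff.mpr (Finset.mem_insert_self a {b, c})) (Finset.insert_subset_iff.mpr ⟨(Finset.mem_insert_self a {b, c}), Finset.singleton_subset_iff.mpr (Finset.mem_insert_of_mem (Finset.mem_insert_of_mem (Finset.mem_singleton_self c)))⟩)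
  have hdisj4 : ∀ v, Disjoint B ((tri ({b, c} : Finset A) ({a} : Finset A) ({a, c} : Finset A)) v) := fun v => hdisjBIG.mono_right (hsub4 v)
  obtain ⟨x4, hxm4, hR4, hund4⟩ := block_structure hn R hcard hpe hkB hdisjB (tri ({b, c} : Finset A) ({a} : Finset A) ({a, c} : Finset A)) hsub4
    (fin3_forall (Finset.insert_nonempty _ _) (Finset.singleton_nonempty _) (Finset.insert_nonempty _ _))
    (by intro x hx
        simp only [Finset.mem_insert, Finset.mem_singleton] at hx
        rcases hx with rfl | rfl | rfl
        · exact ⟨0, (notMem_pair hab hac)⟩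
        · exact ⟨1, (notMem_single hba)⟩
        · exact ⟨1, (notMem_single hca)⟩
        )
  have hval4 : x4 = a ∨ x4 = b ∨ x4 = c := by simpa using hxm4
  have hsub5 : ∀ v : Fin 3, (tri ({b, c} : Finset A) ({c} : Finset A) ({a, b} : Finset A)) v ⊆ ({a, b, c} : Finset A) :=
    fin3_forall (Finset.insert_subset_iff.mpr ⟨(Finset.mem_insert_of_mem (Finset.mem_insert_self b {c})), Finset.singleton_subset_iff.mpr (Finset.mem_insert_of_mem (Finset.mem_insert_of_mem (Finset.mem_singleton_self c)))⟩) (Finset.singleton_subset_iff.mpr (Finset.mem_insert_of_mem (Finset.mem_insert_of_mem (Finset.mem_singleton_self c)))) (Finset.insert_subset_iff.mpr ⟨(Finset.mem_insert_self a {b, c}), Finset.singleton_subset_iff.mpr (Finset.mem_insert_of_mem (Finset.mem_insert_self b {c}))⟩)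
  have hdisj5 : ∀ v, Disjoint B ((tri ({b, c} : Finset A) ({c} : Finset A) ({a, b} : Finset A)) v) := fun v => hdisjBIG.mono_right (hsub5 v)
  obtain ⟨x5, hxm5, hR5, hund5⟩ := block_structure hn R hcard hpe hkB hdisjB (tri ({b, c} : Finset A) ({c} : Finset A) ({a, b} : Finset A)) hsub5
    (fin3_forall (Finset.insert_nonempty _ _) (Finset.singleton_nonempty _) (Finset.insert_nonempty _ _))
    (by intro x hx
        simp only [Finset.mem_insert, Finset.mem_singleton] at hx
        rcases hx with rfl | rfl | rfl
        · exact ⟨0, (notMem_pair hab hac)⟩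
        · exact ⟨1, (notMem_single hbc)⟩
        · exact ⟨2, (notMem_pair hca hcb)⟩
        )
  have hval5 : x5 = a ∨ x5 = b ∨ x5 = c := by simpa using hxm5
  have hsub6 : ∀ v : Fin 3, (tri ({b, c} : Finset A) ({a, c} : Finset A) ({b} : Finset A)) v ⊆ ({a, b, c} : Finset A) :=
    fin3_forall (Finset.insert_subset_iff.mpr ⟨(Finset.mem_insert_of_mem (Finset.mem_insert_self b {c})), Finset.singleton_subset_iff.mpr (Finset.mem_insert_of_mem (Finset.mem_insert_of_mem (Finset.mem_singleton_self c)))⟩) (Finset.insert_subset_iff.mpr ⟨(Finset.mem_insert_self a {b, c}), Finset.singleton_subset_iff.mpr (Finset.mem_insert_of_mem (Finset.mem_insert_of_mem (Finset.mem_singleton_self c)))⟩) (Finset.singleton_subset_iff.mpr (Finset.mem_insert_of_mem (Finset.mem_insert_self b {c})))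
  have hdisj6 : ∀ v, Disjoint B ((tri ({b, c} : Finset A) ({a, c} : Finset A) ({b} : Finset A)) v) := fun v => hdisjBIG.mono_right (hsub6 v)
  obtain ⟨x6, hxm6, hR6, hund6⟩ := block_structure hn R hcard hpe hkB hdisjB (tri ({b, c} : Finset A) ({a, c} : Finset A) ({b} : Finset A)) hsub6
    (fin3_forall (Finset.insert_nonempty _ _) (Finset.insert_nonempty _ _) (Finset.singleton_nonempty _))
    (by intro x hx
        simp only [Finset.mem_insert, Finset.mem_singleton] at hx
        rcases hx with rfl | rfl | rfl
        · exact ⟨0, (notMem_pair hab hac)⟩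
        · exact ⟨1, (notMem_pair hba hbc)⟩
        · exact ⟨2, (notMem_single hcb)⟩
        )
  have hval6 : x6 = a ∨ x6 = b ∨ x6 = c := by simpa using hxm6
  have hsub7 : ∀ v : Fin 3, (tri ({b, c} : Finset A) ({a, b, c} : Finset A) ({a} : Finset A)) v ⊆ ({a, b, c} : Finset A) :=
    fin3_forall (Finset.insert_subset_iff.mpr ⟨(Finset.mem_insert_of_mem (Finset.mem_insert_self b {c})), Finset.singleton_subset_iff.mpr (Finset.mem_insert_of_mem (Finset.mem_insert_of_mem (Finset.mem_singleton_self c)))⟩) (Finset.Subset.refl _) (Finset.singleton_subset_iff.mpr (Finset.mem_insert_self a {b, c}))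
  have hdisj7 : ∀ v, Disjoint B ((tri ({b, c} : Finset A) ({a, b, c} : Finset A) ({a} : Finset A)) v) := fun v => hdisjBIG.mono_right (hsub7 v)
  obtain ⟨x7, hxm7, hR7, hund7⟩ := block_structure hn R hcard hpe hkB hdisjB (tri ({b, c} : Finset A) ({a, b, c} : Finset A) ({a} : Finset A)) hsub7
    (fin3_forall (Finset.insert_nonempty _ _) (Finset.insert_nonempty _ _) (Finset.singleton_nonempty _))
    (by intro x hx
        simp only [Finset.mem_insert, Finset.mem_singleton] at hx
        rcases hx with rfl | rfl | rfl
        · exact ⟨0, (notMem_pair hab hac)⟩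
        · exact ⟨2, (notMem_single hba)⟩
        · exact ⟨2, (notMem_single hca)⟩
        )
  have hval7 : x7 = a ∨ x7 = b ∨ x7 = c := by simpa using hxm7
  have hsub8 : ∀ v : Fin 3, (tri ({a, b, c} : Finset A) ({a} : Finset A) ({b} : Finset A)) v ⊆ ({a, b, c} : Finset A) :=
    fin3_forall (Finset.Subset.refl _) (Finset.singleton_subset_iff.mpr (Finset.mem_insert_self a {b, c})) (Finset.singleton_subset_iff.mpr (Finset.mem_insert_of_mem (Finset.mem_insert_self b {c})))
  have hdisj8 : ∀ v, Disjoint B ((tri ({a, b, c} : Finset A) ({a} : Finset A) ({b} : Finset A)) v) := fun v => hdisjBIG.mono_right (hsub8 v)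
  obtain ⟨x8, hxm8, hR8, hund8⟩ := block_structure hn R hcard hpe hkB hdisjB (tri ({a, b, c} : Finset A) ({a} : Finset A) ({b} : Finset A)) hsub8
    (fin3_forall (Finset.insert_nonempty _ _) (Finset.singleton_nonempty _) (Finset.singleton_nonempty _))
    (by intro x hx
        simp only [Finset.mem_insert, Finset.mem_singleton] at hx
        rcases hx with rfl | rfl | rfl
        · exact ⟨2, (notMem_single hab)⟩
        · exact ⟨1, (notMem_single hba)⟩
        · exact ⟨1, (notMem_single hca)⟩
        )
  have hval8 : x8 = a ∨ x8 = b ∨ x8 = c := by simpa using hxm8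
  have hsub9 : ∀ v : Fin 3, (tri ({a, b, c} : Finset A) ({a} : Finset A) ({c} : Finset A)) v ⊆ ({a, b, c} : Finset A) :=
    fin3_forall (Finset.Subset.refl _) (Finset.singleton_subset_iff.mpr (Finset.mem_insert_self a {b, c})) (Finset.singleton_subset_iff.mpr (Finset.mem_insert_of_mem (Finset.mem_insert_of_mem (Finset.mem_singleton_self c))))
  have hdisj9 : ∀ v, Disjoint B ((tri ({a, b, c} : Finset A) ({a} : Finset A) ({c} : Finset A)) v) := fun v => hdisjBIG.mono_right (hsub9 v)
  obtain ⟨x9, hxm9, hR9, hund9⟩ := block_structure hn R hcard hpe hkB hdisjB (tri ({a, b, c} : Finset A) ({a} : Finset A) ({c} : Finset A)) hsub9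
    (fin3_forall (Finset.insert_nonempty _ _) (Finset.singleton_nonempty _) (Finset.singleton_nonempty _))
    (by intro x hx
        simp only [Finset.mem_insert, Finset.mem_singleton] at hx
        rcases hx with rfl | rfl | rfl
        · exact ⟨2, (notMem_single hac)⟩
        · exact ⟨1, (notMem_single hba)⟩
        · exact ⟨1, (notMem_single hca)⟩
        )
  have hval9 : x9 = a ∨ x9 = b ∨ x9 = c := by simpa using hxm9
  have hsub10 : ∀ v : Fin 3, (tri ({a, b, c} : Finset A) ({c} : Finset A) ({a} : Finset A)) v ⊆ ({a, b, c} : Finset A) :=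
    fin3_forall (Finset.Subset.refl _) (Finset.singleton_subset_iff.mpr (Finset.mem_insert_of_mem (Finset.mem_insert_of_mem (Finset.mem_singleton_self c)))) (Finset.singleton_subset_iff.mpr (Finset.mem_insert_self a {b, c}))
  have hdisj10 : ∀ v, Disjoint B ((tri ({a, b, c} : Finset A) ({c} : Finset A) ({a} : Finset A)) v) := fun v => hdisjBIG.mono_right (hsub10 v)
  obtain ⟨x10, hxm10, hR10, hund10⟩ := block_structure hn R hcard hpe hkB hdisjB (tri ({a, b, c} : Finset A) ({c} : Finset A) ({a} : Finset A)) hsub10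
    (fin3_forall (Finset.insert_nonempty _ _) (Finset.singleton_nonempty _) (Finset.singleton_nonempty _))
    (by intro x hx
        simp only [Finset.mem_insert, Finset.mem_singleton] at hx
        rcases hx with rfl | rfl | rfl
        · exact ⟨1, (notMem_single hac)⟩
        · exact ⟨1, (notMem_single hbc)⟩
        · exact ⟨2, (notMem_single hca)⟩
        )
  have hval10 : x10 = a ∨ x10 = b ∨ x10 = c := by simpa using hxm10
  have hsub11 : ∀ v : Fin 3, (tri ({a, b, c} : Finset A) ({c} : Finset A) ({b} : Finset A)) v ⊆ ({a, b, c} : Finset A) :=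
    fin3_forall (Finset.Subset.refl _) (Finset.singleton_subset_iff.mpr (Finset.mem_insert_of_mem (Finset.mem_insert_of_mem (Finset.mem_singleton_self c)))) (Finset.singleton_subset_iff.mpr (Finset.mem_insert_of_mem (Finset.mem_insert_self b {c})))
  have hdisj11 : ∀ v, Disjoint B ((tri ({a, b, c} : Finset A) ({c} : Finset A) ({b} : Finset A)) v) := fun v => hdisjBIG.mono_right (hsub11 v)
  obtain ⟨x11, hxm11, hR11, hund11⟩ := block_structure hn R hcard hpe hkB hdisjB (tri ({a, b, c} : Finset A) ({c} : Finset A) ({b} : Finset A)) hsub11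
    (fin3_forall (Finset.insert_nonempty _ _) (Finset.singleton_nonempty _) (Finset.singleton_nonempty _))
    (by intro x hx
        simp only [Finset.mem_insert, Finset.mem_singleton] at hx
        rcases hx with rfl | rfl | rfl
        · exact ⟨1, (notMem_single hac)⟩
        · exact ⟨1, (notMem_single hbc)⟩
        · exact ⟨2, (notMem_single hcb)⟩
        )
  have hval11 : x11 = a ∨ x11 = b ∨ x11 = c := by simpa using hxm11
  have hsub12 : ∀ v : Fin 3, (tri ({a, b, c} : Finset A) ({c} : Finset A) ({a, b} : Finset A)) v ⊆ ({a, b, c} : Finset A) :=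
    fin3_forall (Finset.Subset.refl _) (Finset.singleton_subset_iff.mpr (Finset.mem_insert_of_mem (Finset.mem_insert_of_mem (Finset.mem_singleton_self c)))) (Finset.insert_subset_iff.mpr ⟨(Finset.mem_insert_self a {b, c}), Finset.singleton_subset_iff.mpr (Finset.mem_insert_of_mem (Finset.mem_insert_self b {c}))⟩)
  have hdisj12 : ∀ v, Disjoint B ((tri ({a, b, c} : Finset A) ({c} : Finset A) ({a, b} : Finset A)) v) := fun v => hdisjBIG.mono_right (hsub12 v)
  obtain ⟨x12, hxm12, hR12, hund12⟩ := block_structure hn R hcard hpe hkB hdisjB (tri ({a, b, c} : Finset A) ({c} : Finset A) ({a, b} : Finset A)) hsub12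
    (fin3_forall (Finset.insert_nonempty _ _) (Finset.singleton_nonempty _) (Finset.insert_nonempty _ _))
    (by intro x hx
        simp only [Finset.mem_insert, Finset.mem_singleton] at hx
        rcases hx with rfl | rfl | rfl
        · exact ⟨1, (notMem_single hac)⟩
        · exact ⟨1, (notMem_single hbc)⟩
        · exact ⟨2, (notMem_pair hca hcb)⟩
        )
  have hval12 : x12 = a ∨ x12 = b ∨ x12 = c := by simpa using hxm12
  have hsub13 : ∀ v : Fin 3, (tri ({a, b, c} : Finset A) ({a, c} : Finset A) ({b} : Finset A)) v ⊆ ({a, b, c} : Finset A) :=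
    fin3_forall (Finset.Subset.refl _) (Finset.insert_subset_iff.mpr ⟨(Finset.mem_insert_self a {b, c}), Finset.singleton_subset_iff.mpr (Finset.mem_insert_of_mem (Finset.mem_insert_of_mem (Finset.mem_singleton_self c)))⟩) (Finset.singleton_subset_iff.mpr (Finset.mem_insert_of_mem (Finset.mem_insert_self b {c})))
  have hdisj13 : ∀ v, Disjoint B ((tri ({a, b, c} : Finset A) ({a, c} : Finset A) ({b} : Finset A)) v) := fun v => hdisjBIG.mono_right (hsub13 v)
  obtain ⟨x13, hxm13, hR13, hund13⟩ := block_structure hn R hcard hpe hkB hdisjB (tri ({a, b, c} : Finset A) ({a, c} : Finset A) ({b} : Finset A)) hsub13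
    (fin3_forall (Finset.insert_nonempty _ _) (Finset.insert_nonempty _ _) (Finset.singleton_nonempty _))
    (by intro x hx
        simp only [Finset.mem_insert, Finset.mem_singleton] at hx
        rcases hx with rfl | rfl | rfl
        · exact ⟨2, (notMem_single hab)⟩
        · exact ⟨1, (notMem_pair hba hbc)⟩
        · exact ⟨2, (notMem_single hcb)⟩
        )
  have hval13 : x13 = a ∨ x13 = b ∨ x13 = c := by simpa using hxm13
  have hfact1 : x0 ≠ c := fun hEq => hund0 a (Finset.mem_insert_self a {b, c})
    (by rw [hEq]; exact fin3_forall (fun _ => (Finset.mem_insert_self a {c})) (fun h => absurd h (notMem_pair hca hcb)) (fun h => absurd h (notMem_single hcb)))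
    ⟨1, by rw [hEq]; exact ⟨(Finset.mem_insert_self a {b}), (notMem_pair hca hcb)⟩⟩
  have hfact2 : x1 ≠ b := fun hEq => hund1 a (Finset.mem_insert_self a {b, c})
    (by rw [hEq]; exact fin3_forall (fun h => absurd h (notMem_pair hba hbc)) (fun _ => (Finset.mem_insert_self a {b})) (fun h => absurd h (notMem_single hbc)))
    ⟨0, by rw [hEq]; exact ⟨(Finset.mem_insert_self a {c}), (notMem_pair hba hbc)⟩⟩
  have hfact3 : x3 ≠ c := fun hEq => hund3 b (Finset.mem_insert_of_mem (Finset.mem_insert_self b {c}))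
    (by rw [hEq]; exact fin3_forall (fun _ => (Finset.mem_insert_self b {c})) (fun h => absurd h (notMem_single hca)) (fun h => absurd h (notMem_pair hca hcb)))
    ⟨2, by rw [hEq]; exact ⟨(Finset.mem_insert_of_mem (Finset.mem_singleton_self b)), (notMem_pair hca hcb)⟩⟩
  have hfact4 : x4 ≠ b := fun hEq => hund4 c (Finset.mem_insert_of_mem (Finset.mem_insert_of_mem (Finset.mem_singleton_self c)))
    (by rw [hEq]; exact fin3_forall (fun _ => (Finset.mem_insert_of_mem (Finset.mem_singleton_self c))) (fun h => absurd h (notMem_single hba)) (fun h => absurd h (notMem_pair hba hbc)))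
    ⟨2, by rw [hEq]; exact ⟨(Finset.mem_insert_of_mem (Finset.mem_singleton_self c)), (notMem_pair hba hbc)⟩⟩
  have hfact5 : x5 ≠ a := fun hEq => hund5 b (Finset.mem_insert_of_mem (Finset.mem_insert_self b {c}))
    (by rw [hEq]; exact fin3_forall (fun h => absurd h (notMem_pair hab hac)) (fun h => absurd h (notMem_single hac)) (fun _ => (Finset.mem_insert_of_mem (Finset.mem_singleton_self b))))
    ⟨0, by rw [hEq]; exact ⟨(Finset.mem_insert_self b {c}), (notMem_pair hab hac)⟩⟩
  have hfact6 : x6 ≠ a := fun hEq => hund6 c (Finset.mem_insert_of_mem (Finset.mem_insert_of_mem (Finset.mem_singleton_self c)))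
    (by rw [hEq]; exact fin3_forall (fun h => absurd h (notMem_pair hab hac)) (fun _ => (Finset.mem_insert_of_mem (Finset.mem_singleton_self c))) (fun h => absurd h (notMem_single hab)))
    ⟨0, by rw [hEq]; exact ⟨(Finset.mem_insert_of_mem (Finset.mem_singleton_self c)), (notMem_pair hab hac)⟩⟩
  have hfact7 : x8 ≠ c := fun hEq => hund8 a (Finset.mem_insert_self a {b, c})
    (by rw [hEq]; exact fin3_forall (fun _ => (Finset.mem_insert_self a {b, c})) (fun h => absurd h (notMem_single hca)) (fun h => absurd h (notMem_single hcb)))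
    ⟨1, by rw [hEq]; exact ⟨(Finset.mem_singleton_self a), (notMem_single hca)⟩⟩
  have hfact8 : x9 ≠ b := fun hEq => hund9 a (Finset.mem_insert_self a {b, c})
    (by rw [hEq]; exact fin3_forall (fun _ => (Finset.mem_insert_self a {b, c})) (fun h => absurd h (notMem_single hba)) (fun h => absurd h (notMem_single hbc)))
    ⟨1, by rw [hEq]; exact ⟨(Finset.mem_singleton_self a), (notMem_single hba)⟩⟩
  have hfact9 : x10 ≠ b := fun hEq => hund10 a (Finset.mem_insert_self a {b, c})
    (by rw [hEq]; exact fin3_forall (fun _ => (Finset.mem_insert_self a {b, c})) (fun h => absurd h (notMem_single hbc)) (fun h => absurd h (notMem_single hba)))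
    ⟨2, by rw [hEq]; exact ⟨(Finset.mem_singleton_self a), (notMem_single hba)⟩⟩
  have hfact10 : x11 ≠ a := fun hEq => hund11 b (Finset.mem_insert_of_mem (Finset.mem_insert_self b {c}))
    (by rw [hEq]; exact fin3_forall (fun _ => (Finset.mem_insert_of_mem (Finset.mem_insert_self b {c}))) (fun h => absurd h (notMem_single hac)) (fun h => absurd h (notMem_single hab)))
    ⟨2, by rw [hEq]; exact ⟨(Finset.mem_singleton_self b), (notMem_single hab)⟩⟩
  rcases hval0 with hB0 | hB0 | hB0
  · have hfact11 : x2 ≠ b := by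
      intro hEq
      exact sgsp_step hn R hgsp B a b (tri ({a, c} : Finset A) ({a, b} : Finset A) ({b} : Finset A)) (tri ({a, c} : Finset A) ({a, b} : Finset A) ({b, c} : Finset A)) (2 : Fin 3) hdisj0 haB hbB
        (by rw [hR0, hB0]) (by rw [hR2, hEq])
        (fin3_forall (fun hvne => absurd hvne (not_or.mpr ⟨fun h => h rfl, by decide⟩)) (fun hvne => absurd hvne (not_or.mpr ⟨fun h => h rfl, by decide⟩)) (fun _ => (fun h => absurd h (notMem_single hab)))) ⟨(Finset.mem_singleton_self b), (notMem_single hab)⟩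
    have hfact12 : x8 ≠ b := by
      intro hEq
      exact sgsp_step hn R hgsp B b a (tri ({a, b, c} : Finset A) ({a} : Finset A) ({b} : Finset A)) (tri ({a, c} : Finset A) ({a, b} : Finset A) ({b} : Finset A)) (1 : Fin 3) hdisj8 hbB haB
        (by rw [hR8, hEq]) (by rw [hR0, hB0])
        (fin3_forall (fun _ => (fun _ => (Finset.mem_insert_self a {b, c}))) (fun _ => (fun h => absurd h (notMem_single hba))) (fun hvne => absurd hvne (not_or.mpr ⟨fun h => h rfl, by decide⟩))) ⟨(Finset.mem_singleton_self a), (notMem_single hba)⟩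
    have hfact13 : x13 ≠ b := by
      intro hEq
      exact sgsp_step hn R hgsp B b a (tri ({a, b, c} : Finset A) ({a, c} : Finset A) ({b} : Finset A)) (tri ({a, c} : Finset A) ({a, b} : Finset A) ({b} : Finset A)) (1 : Fin 3) hdisj13 hbB haB
        (by rw [hR13, hEq]) (by rw [hR0, hB0])
        (fin3_forall (fun _ => (fun _ => (Finset.mem_insert_self a {b, c}))) (fun _ => (fun h => absurd h (notMem_pair hba hbc))) (fun hvne => absurd hvne (not_or.mpr ⟨fun h => h rfl, by decide⟩))) ⟨(Finset.mem_insert_self a {c}), (notMem_pair hba hbc)⟩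
    have hfact14 : x3 ≠ b := by
      intro hEq
      rcases hval8 with hq | hq | hq
      · exact sgsp_step hn R hgsp B a b (tri ({a, b, c} : Finset A) ({a} : Finset A) ({b} : Finset A)) (tri ({b, c} : Finset A) ({a} : Finset A) ({a, b} : Finset A)) (2 : Fin 3) hdisj8 haB hbB
          (by rw [hR8, hq]) (by rw [hR3, hEq])
          (fin3_forall (fun _ => (fun _ => (Finset.mem_insert_of_mem (Finset.mem_insert_self b {c})))) (fun hvne => absurd hvne (not_or.mpr ⟨fun h => h rfl, by decide⟩)) (fun _ => (fun h => absurd h (notMem_single hab)))) ⟨(Finset.mem_singleton_self b), (notMem_single hab)⟩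
      · exact absurd hq hfact12
      · exact absurd hq hfact7
    have hfact15 : x4 ≠ c := by
      intro hEq
      rcases hval3 with hq | hq | hq
      · exact sgsp_step hn R hgsp B c a (tri ({b, c} : Finset A) ({a} : Finset A) ({a, c} : Finset A)) (tri ({b, c} : Finset A) ({a} : Finset A) ({a, b} : Finset A)) (1 : Fin 3) hdisj4 hcB haB
          (by rw [hR4, hEq]) (by rw [hR3, hq])
          (fin3_forall (fun hvne => absurd hvne (not_or.mpr ⟨fun h => h rfl, by decide⟩)) (fun _ => (fun h => absurd h (notMem_single hca))) (fun _ => (fun _ => (Finset.mem_insert_self a {c})))) ⟨(Finset.mem_singleton_self a), (notMem_single hca)⟩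
      · exact absurd hq hfact14
      · exact absurd hq hfact3
    have hfact16 : x6 ≠ b := by
      intro hEq
      rcases hval13 with hq | hq | hq
      · exact sgsp_step hn R hgsp B a b (tri ({a, b, c} : Finset A) ({a, c} : Finset A) ({b} : Finset A)) (tri ({b, c} : Finset A) ({a, c} : Finset A) ({b} : Finset A)) (2 : Fin 3) hdisj13 haB hbB
          (by rw [hR13, hq]) (by rw [hR6, hEq])
          (fin3_forall (fun _ => (fun _ => (Finset.mem_insert_of_mem (Finset.mem_insert_self b {c})))) (fun hvne => absurd hvne (not_or.mpr ⟨fun h => h rfl, by decide⟩)) (fun _ => (fun h => absurd h (notMem_single hab)))) ⟨(Finset.mem_singleton_self b), (notMem_single hab)⟩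
      · exact absurd hq hfact13
      · exact sgsp_step hn R hgsp B b c (tri ({b, c} : Finset A) ({a, c} : Finset A) ({b} : Finset A)) (tri ({a, b, c} : Finset A) ({a, c} : Finset A) ({b} : Finset A)) (1 : Fin 3) hdisj6 hbB hcB
          (by rw [hR6, hEq]) (by rw [hR13, hq])
          (fin3_forall (fun _ => (fun _ => (Finset.mem_insert_of_mem (Finset.mem_singleton_self c)))) (fun _ => (fun h => absurd h (notMem_pair hba hbc))) (fun hvne => absurd hvne (not_or.mpr ⟨fun h => h rfl, by decide⟩))) ⟨(Finset.mem_insert_of_mem (Finset.mem_singleton_self c)), (notMem_pair hba hbc)⟩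
    have hfact17 : x7 ≠ b := by
      intro hEq
      rcases hval3 with hq | hq | hq
      · exact sgsp_step hn R hgsp B b a (tri ({b, c} : Finset A) ({a, b, c} : Finset A) ({a} : Finset A)) (tri ({b, c} : Finset A) ({a} : Finset A) ({a, b} : Finset A)) (2 : Fin 3) hdisj7 hbB haB
          (by rw [hR7, hEq]) (by rw [hR3, hq])
          (fin3_forall (fun hvne => absurd hvne (not_or.mpr ⟨fun h => h rfl, by decide⟩)) (fun _ => (fun _ => (Finset.mem_insert_self a {b, c}))) (fun _ => (fun h => absurd h (notMem_single hba)))) ⟨(Finset.mem_singleton_self a), (notMem_single hba)⟩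
      · exact absurd hq hfact14
      · exact absurd hq hfact3
    have hfact18 : x7 ≠ c := by
      intro hEq
      rcases hval3 with hq | hq | hq
      · exact sgsp_step hn R hgsp B c a (tri ({b, c} : Finset A) ({a, b, c} : Finset A) ({a} : Finset A)) (tri ({b, c} : Finset A) ({a} : Finset A) ({a, b} : Finset A)) (2 : Fin 3) hdisj7 hcB haB
          (by rw [hR7, hEq]) (by rw [hR3, hq])
          (fin3_forall (fun hvne => absurd hvne (not_or.mpr ⟨fun h => h rfl, by decide⟩)) (fun _ => (fun _ => (Finset.mem_insert_self a {b, c}))) (fun _ => (fun h => absurd h (notMem_single hca)))) ⟨(Finset.mem_singleton_self a), (notMem_single hca)⟩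
      · exact absurd hq hfact14
      · exact absurd hq hfact3
    have hfact19 : x9 ≠ c := by
      intro hEq
      rcases hval4 with hq | hq | hq
      · exact sgsp_step hn R hgsp B a c (tri ({b, c} : Finset A) ({a} : Finset A) ({a, c} : Finset A)) (tri ({a, b, c} : Finset A) ({a} : Finset A) ({c} : Finset A)) (0 : Fin 3) hdisj4 haB hcB
          (by rw [hR4, hq]) (by rw [hR9, hEq])
          (fin3_forall (fun _ => (fun h => absurd h (notMem_pair hab hac))) (fun hvne => absurd hvne (not_or.mpr ⟨fun h => h rfl, by decide⟩)) (fun _ => (fun _ => (Finset.mem_insert_of_mem (Finset.mem_singleton_self c))))) ⟨(Finset.mem_insert_of_mem (Finset.mem_singleton_self c)), (notMem_pair hab hac)⟩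
      · exact absurd hq hfact4
      · exact absurd hq hfact15
    have hfact20 : x10 ≠ c := by
      intro hEq
      rcases hval7 with hq | hq | hq
      · exact sgsp_step hn R hgsp B a c (tri ({b, c} : Finset A) ({a, b, c} : Finset A) ({a} : Finset A)) (tri ({a, b, c} : Finset A) ({c} : Finset A) ({a} : Finset A)) (0 : Fin 3) hdisj7 haB hcB
          (by rw [hR7, hq]) (by rw [hR10, hEq])
          (fin3_forall (fun _ => (fun h => absurd h (notMem_pair hab hac))) (fun _ => (fun _ => (Finset.mem_insert_of_mem (Finset.mem_insert_of_mem (Finset.mem_singleton_self c))))) (fun hvne => absurd hvne (not_or.mpr ⟨fun h => h rfl, by decide⟩))) ⟨(Finset.mem_insert_of_mem (Finset.mem_singleton_self c)), (notMem_pair hab hac)⟩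
      · exact absurd hq hfact17
      · exact absurd hq hfact18
    have hfact21 : x11 ≠ b := by
      intro hEq
      rcases hval6 with hq | hq | hq
      · exact absurd hq hfact6
      · exact absurd hq hfact16
      · exact sgsp_step hn R hgsp B b c (tri ({a, b, c} : Finset A) ({c} : Finset A) ({b} : Finset A)) (tri ({b, c} : Finset A) ({a, c} : Finset A) ({b} : Finset A)) (1 : Fin 3) hdisj11 hbB hcB
          (by rw [hR11, hEq]) (by rw [hR6, hq])
          (fin3_forall (fun _ => (fun _ => (Finset.mem_insert_of_mem (Finset.mem_insert_of_mem (Finset.mem_singleton_self c))))) (fun _ => (fun h => absurd h (notMem_single hbc))) (fun hvne => absurd hvne (not_or.mpr ⟨fun h => h rfl, by decide⟩))) ⟨(Finset.mem_singleton_self c), (notMem_single hbc)⟩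
    have hfact22 : x12 ≠ b := by
      intro hEq
      rcases hval11 with hq | hq | hq
      · exact absurd hq hfact10
      · exact absurd hq hfact21
      · exact sgsp_step hn R hgsp B c b (tri ({a, b, c} : Finset A) ({c} : Finset A) ({b} : Finset A)) (tri ({a, b, c} : Finset A) ({c} : Finset A) ({a, b} : Finset A)) (2 : Fin 3) hdisj11 hcB hbB
          (by rw [hR11, hq]) (by rw [hR12, hEq])
          (fin3_forall (fun hvne => absurd hvne (not_or.mpr ⟨fun h => h rfl, by decide⟩)) (fun hvne => absurd hvne (not_or.mpr ⟨fun h => h rfl, by decide⟩)) (fun _ => (fun h => absurd h (notMem_single hcb)))) ⟨(Finset.mem_singleton_self b), (notMem_single hcb)⟩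
    have hfact23 : x12 ≠ c := by
      intro hEq
      rcases hval10 with hq | hq | hq
      · exact sgsp_step hn R hgsp B c a (tri ({a, b, c} : Finset A) ({c} : Finset A) ({a, b} : Finset A)) (tri ({a, b, c} : Finset A) ({c} : Finset A) ({a} : Finset A)) (2 : Fin 3) hdisj12 hcB haB
          (by rw [hR12, hEq]) (by rw [hR10, hq])
          (fin3_forall (fun hvne => absurd hvne (not_or.mpr ⟨fun h => h rfl, by decide⟩)) (fun hvne => absurd hvne (not_or.mpr ⟨fun h => h rfl, by decide⟩)) (fun _ => (fun h => absurd h (notMem_pair hca hcb)))) ⟨(Finset.mem_insert_self a {b}), (notMem_pair hca hcb)⟩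
      · exact absurd hq hfact9
      · exact absurd hq hfact20
    have hfact24 : x1 ≠ c := by
      intro hEq
      rcases hval9 with hq | hq | hq
      · exact sgsp_step hn R hgsp B c a (tri ({a, c} : Finset A) ({a, b} : Finset A) ({c} : Finset A)) (tri ({a, b, c} : Finset A) ({a} : Finset A) ({c} : Finset A)) (1 : Fin 3) hdisj1 hcB haB
          (by rw [hR1, hEq]) (by rw [hR9, hq])
          (fin3_forall (fun _ => (fun _ => (Finset.mem_insert_self a {c}))) (fun _ => (fun h => absurd h (notMem_pair hca hcb))) (fun hvne => absurd hvne (not_or.mpr ⟨fun h => h rfl, by decide⟩))) ⟨(Finset.mem_insert_self a {b}), (notMem_pair hca hcb)⟩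
      · exact absurd hq hfact8
      · exact absurd hq hfact19
    have hfact25 : x2 ≠ c := by
      intro hEq
      rcases hval1 with hq | hq | hq
      · exact sgsp_step hn R hgsp B a c (tri ({a, c} : Finset A) ({a, b} : Finset A) ({c} : Finset A)) (tri ({a, c} : Finset A) ({a, b} : Finset A) ({b, c} : Finset A)) (2 : Fin 3) hdisj1 haB hcB
          (by rw [hR1, hq]) (by rw [hR2, hEq])
          (fin3_forall (fun hvne => absurd hvne (not_or.mpr ⟨fun h => h rfl, by decide⟩)) (fun hvne => absurd hvne (not_or.mpr ⟨fun h => h rfl, by decide⟩)) (fun _ => (fun h => absurd h (notMem_single hac)))) ⟨(Finset.mem_singleton_self c), (notMem_single hac)⟩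
      · exact absurd hq hfact2
      · exact absurd hq hfact24
    have hfact26 : x5 ≠ b := by
      intro hEq
      rcases hval11 with hq | hq | hq
      · exact absurd hq hfact10
      · exact absurd hq hfact21
      · exact sgsp_step hn R hgsp B c b (tri ({a, b, c} : Finset A) ({c} : Finset A) ({b} : Finset A)) (tri ({b, c} : Finset A) ({c} : Finset A) ({a, b} : Finset A)) (2 : Fin 3) hdisj11 hcB hbB
          (by rw [hR11, hq]) (by rw [hR5, hEq])
          (fin3_forall (fun _ => (fun _ => (Finset.mem_insert_of_mem (Finset.mem_insert_self b {c})))) (fun hvne => absurd hvne (not_or.mpr ⟨fun h => h rfl, by decide⟩)) (fun _ => (fun h => absurd h (notMem_single hcb)))) ⟨(Finset.mem_singleton_self b), (notMem_single hcb)⟩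
    have hfact27 : x5 ≠ c := by
      intro hEq
      rcases hval12 with hq | hq | hq
      · exact sgsp_step hn R hgsp B a c (tri ({a, b, c} : Finset A) ({c} : Finset A) ({a, b} : Finset A)) (tri ({b, c} : Finset A) ({c} : Finset A) ({a, b} : Finset A)) (1 : Fin 3) hdisj12 haB hcB
          (by rw [hR12, hq]) (by rw [hR5, hEq])
          (fin3_forall (fun _ => (fun _ => (Finset.mem_insert_of_mem (Finset.mem_insert_of_mem (Finset.mem_singleton_self c))))) (fun _ => (fun h => absurd h (notMem_single hac))) (fun hvne => absurd hvne (not_or.mpr ⟨fun h => h rfl, by decide⟩))) ⟨(Finset.mem_singleton_self c), (notMem_single hac)⟩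
      · exact absurd hq hfact22
      · exact absurd hq hfact23
    rcases hval5 with h | h | h
    · exact absurd h hfact5
    · exact absurd h hfact26
    · exact absurd h hfact27
  · have hfact28 : x2 ≠ a := by
      intro hEq
      exact sgsp_step hn R hgsp B a b (tri ({a, c} : Finset A) ({a, b} : Finset A) ({b, c} : Finset A)) (tri ({a, c} : Finset A) ({a, b} : Finset A) ({b} : Finset A)) (2 : Fin 3) hdisj2 haB hbB
        (by rw [hR2, hEq]) (by rw [hR0, hB0])
        (fin3_forall (fun hvne => absurd hvne (not_or.mpr ⟨fun h => h rfl, by decide⟩)) (fun hvne => absurd hvne (not_or.mpr ⟨fun h => h rfl, by decide⟩)) (fun _ => (fun h => absurd h (notMem_pair hab hac)))) ⟨(Finset.mem_insert_self b {c}), (notMem_pair hab hac)⟩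
    have hfact29 : x2 ≠ c := by
      intro hEq
      exact sgsp_step hn R hgsp B c b (tri ({a, c} : Finset A) ({a, b} : Finset A) ({b, c} : Finset A)) (tri ({a, c} : Finset A) ({a, b} : Finset A) ({b} : Finset A)) (1 : Fin 3) hdisj2 hcB hbB
        (by rw [hR2, hEq]) (by rw [hR0, hB0])
        (fin3_forall (fun hvne => absurd hvne (not_or.mpr ⟨fun h => h rfl, by decide⟩)) (fun _ => (fun h => absurd h (notMem_pair hca hcb))) (fun _ => (fun _ => (Finset.mem_insert_self b {c})))) ⟨(Finset.mem_insert_of_mem (Finset.mem_singleton_self b)), (notMem_pair hca hcb)⟩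
    have hfact30 : x8 ≠ a := by
      intro hEq
      exact sgsp_step hn R hgsp B b a (tri ({a, c} : Finset A) ({a, b} : Finset A) ({b} : Finset A)) (tri ({a, b, c} : Finset A) ({a} : Finset A) ({b} : Finset A)) (0 : Fin 3) hdisj0 hbB haB
        (by rw [hR0, hB0]) (by rw [hR8, hEq])
        (fin3_forall (fun _ => (fun h => absurd h (notMem_pair hba hbc))) (fun _ => (fun _ => (Finset.mem_insert_self a {b}))) (fun hvne => absurd hvne (not_or.mpr ⟨fun h => h rfl, by decide⟩))) ⟨(Finset.mem_insert_self a {c}), (notMem_pair hba hbc)⟩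
    have hfact31 : x13 ≠ a := by
      intro hEq
      exact sgsp_step hn R hgsp B b a (tri ({a, c} : Finset A) ({a, b} : Finset A) ({b} : Finset A)) (tri ({a, b, c} : Finset A) ({a, c} : Finset A) ({b} : Finset A)) (0 : Fin 3) hdisj0 hbB haB
        (by rw [hR0, hB0]) (by rw [hR13, hEq])
        (fin3_forall (fun _ => (fun h => absurd h (notMem_pair hba hbc))) (fun _ => (fun _ => (Finset.mem_insert_self a {b}))) (fun hvne => absurd hvne (not_or.mpr ⟨fun h => h rfl, by decide⟩))) ⟨(Finset.mem_insert_self a {c}), (notMem_pair hba hbc)⟩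
    have hfact32 : x1 ≠ c := by
      intro hEq
      rcases hval2 with hq | hq | hq
      · exact absurd hq hfact28
      · exact sgsp_step hn R hgsp B b c (tri ({a, c} : Finset A) ({a, b} : Finset A) ({b, c} : Finset A)) (tri ({a, c} : Finset A) ({a, b} : Finset A) ({c} : Finset A)) (0 : Fin 3) hdisj2 hbB hcB
          (by rw [hR2, hq]) (by rw [hR1, hEq])
          (fin3_forall (fun _ => (fun h => absurd h (notMem_pair hba hbc))) (fun hvne => absurd hvne (not_or.mpr ⟨fun h => h rfl, by decide⟩)) (fun _ => (fun _ => (Finset.mem_insert_of_mem (Finset.mem_singleton_self c))))) ⟨(Finset.mem_insert_of_mem (Finset.mem_singleton_self c)), (notMem_pair hba hbc)⟩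
      · exact absurd hq hfact29
    have hfact33 : x3 ≠ a := by
      intro hEq
      rcases hval8 with hq | hq | hq
      · exact absurd hq hfact30
      · exact sgsp_step hn R hgsp B a b (tri ({b, c} : Finset A) ({a} : Finset A) ({a, b} : Finset A)) (tri ({a, b, c} : Finset A) ({a} : Finset A) ({b} : Finset A)) (0 : Fin 3) hdisj3 haB hbB
          (by rw [hR3, hEq]) (by rw [hR8, hq])
          (fin3_forall (fun _ => (fun h => absurd h (notMem_pair hab hac))) (fun hvne => absurd hvne (not_or.mpr ⟨fun h => h rfl, by decide⟩)) (fun _ => (fun _ => (Finset.mem_insert_of_mem (Finset.mem_singleton_self b))))) ⟨(Finset.mem_insert_self b {c}), (notMem_pair hab hac)⟩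
      · exact absurd hq hfact7
    have hfact34 : x4 ≠ a := by
      intro hEq
      rcases hval3 with hq | hq | hq
      · exact absurd hq hfact33
      · exact sgsp_step hn R hgsp B b a (tri ({b, c} : Finset A) ({a} : Finset A) ({a, b} : Finset A)) (tri ({b, c} : Finset A) ({a} : Finset A) ({a, c} : Finset A)) (1 : Fin 3) hdisj3 hbB haB
          (by rw [hR3, hq]) (by rw [hR4, hEq])
          (fin3_forall (fun hvne => absurd hvne (not_or.mpr ⟨fun h => h rfl, by decide⟩)) (fun _ => (fun h => absurd h (notMem_single hba))) (fun _ => (fun _ => (Finset.mem_insert_self a {b})))) ⟨(Finset.mem_singleton_self a), (notMem_single hba)⟩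
      · exact absurd hq hfact3
    have hfact35 : x7 ≠ a := by
      intro hEq
      rcases hval3 with hq | hq | hq
      · exact absurd hq hfact33
      · exact sgsp_step hn R hgsp B b a (tri ({b, c} : Finset A) ({a} : Finset A) ({a, b} : Finset A)) (tri ({b, c} : Finset A) ({a, b, c} : Finset A) ({a} : Finset A)) (1 : Fin 3) hdisj3 hbB haB
          (by rw [hR3, hq]) (by rw [hR7, hEq])
          (fin3_forall (fun hvne => absurd hvne (not_or.mpr ⟨fun h => h rfl, by decide⟩)) (fun _ => (fun h => absurd h (notMem_single hba))) (fun _ => (fun _ => (Finset.mem_insert_self a {b})))) ⟨(Finset.mem_singleton_self a), (notMem_single hba)⟩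
      · exact absurd hq hfact3
    have hfact36 : x9 ≠ a := by
      intro hEq
      rcases hval4 with hq | hq | hq
      · exact absurd hq hfact34
      · exact absurd hq hfact4
      · exact sgsp_step hn R hgsp B a c (tri ({a, b, c} : Finset A) ({a} : Finset A) ({c} : Finset A)) (tri ({b, c} : Finset A) ({a} : Finset A) ({a, c} : Finset A)) (2 : Fin 3) hdisj9 haB hcB
          (by rw [hR9, hEq]) (by rw [hR4, hq])
          (fin3_forall (fun _ => (fun _ => (Finset.mem_insert_of_mem (Finset.mem_insert_of_mem (Finset.mem_singleton_self c))))) (fun hvne => absurd hvne (not_or.mpr ⟨fun h => h rfl, by decide⟩)) (fun _ => (fun h => absurd h (notMem_single hac)))) ⟨(Finset.mem_singleton_self c), (notMem_single hac)⟩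
    have hfact37 : x9 ≠ c := by
      intro hEq
      rcases hval1 with hq | hq | hq
      · exact sgsp_step hn R hgsp B c a (tri ({a, b, c} : Finset A) ({a} : Finset A) ({c} : Finset A)) (tri ({a, c} : Finset A) ({a, b} : Finset A) ({c} : Finset A)) (1 : Fin 3) hdisj9 hcB haB
          (by rw [hR9, hEq]) (by rw [hR1, hq])
          (fin3_forall (fun _ => (fun _ => (Finset.mem_insert_self a {b, c}))) (fun _ => (fun h => absurd h (notMem_single hca))) (fun hvne => absurd hvne (not_or.mpr ⟨fun h => h rfl, by decide⟩))) ⟨(Finset.mem_singleton_self a), (notMem_single hca)⟩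
      · exact absurd hq hfact2
      · exact absurd hq hfact32
    rcases hval9 with h | h | h
    · exact absurd h hfact36
    · exact absurd h hfact8
    · exact absurd h hfact37
  · exact absurd hB0 hfact1
end

section
/- Any non-unanimous multi-winner approval-based voting rule has infinite (unbounded) approximation ratio for k-minimax approval voting: for every ρ ≥ 1 there is a profile P with D(R(P),P) > ρ · min_K D(K,P), where the minimum is over size-k committees. -/
/-- The minimax objective: the maximum Hamming distance of a committee `C`
from the ballots of profile `P`. -/
def Dmax {A : Type*} [DecidableEq A] {n : ℕ}
    (C : Finset A) (P : Fin n → Finset A) : ℕ :=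
  Finset.univ.sup (fun i => hd C (P i))

/-- A non-unanimous voting rule has an unbounded approximation ratio for
`k`-minimax approval voting: for every `ρ ≥ 1` there is a profile `P` such that
`D(R(P),P) > ρ · min_K D(K,P)`, the minimum being over size-`k` committees. -/
theorem nonunanimous_unbounded_minimax {A : Type*} [Fintype A] [DecidableEq A]
    {n k : ℕ} (hn : 1 ≤ n) (hk : k ≤ Fintype.card A)
    (R : (Fin n → Finset A) → Finset A)
    (hNonUnan : ¬ Unanimous k R) :
    ∀ ρ : ℝ, 1 ≤ ρ →
      ∃ P : Fin n → Finset A,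
        ∀ Kmin : Finset A, Kmin.card = k →
          (∀ K : Finset A, K.card = k → Dmax Kmin P ≤ Dmax K P) →
          (Dmax (R P) P : ℝ) > ρ * (Dmax Kmin P : ℝ) := by
  intro ρ hρ
  simp only [Unanimous, not_forall] at hNonUnan
  obtain ⟨S, hSk, hRS⟩ := hNonUnan
  refine ⟨fun _ => S, fun Kmin hKmin hmin => ?_⟩
  have hzero : Dmax Kmin (fun _ : Fin n => S) = 0 := by
    have h := hmin S hSk
    have : Dmax S (fun _ : Fin n => S) = 0 := by
      simp [Dmax, hd]
    omega
  have hne : R (fun _ : Fin n => S) ≠ S := hRS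
  have hpos : 0 < Dmax (R (fun _ : Fin n => S)) (fun _ : Fin n => S) := by
    have hi : (⟨0, hn⟩ : Fin n) ∈ (Finset.univ : Finset (Fin n)) := Finset.mem_univ _
    have hle : hd (R (fun _ : Fin n => S)) S ≤ Dmax (R (fun _ : Fin n => S)) (fun _ : Fin n => S) :=
      Finset.le_sup (f := fun _ => hd (R (fun _ : Fin n => S)) S) hi
    have hdpos : 0 < hd (R (fun _ : Fin n => S)) S := by
      rcases Nat.eq_zero_or_pos (hd (R (fun _ : Fin n => S)) S) with h0 | h
      · exfalso
        apply hne
        have h1 : (R (fun _ : Fin n => S) \ S).card = 0 ∧ (S \ R (fun _ : Fin n => S)).card = 0 := by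
          unfold hd at h0; omega
        have e1 : R (fun _ : Fin n => S) \ S = ∅ := Finset.card_eq_zero.mp h1.1
        have e2 : S \ R (fun _ : Fin n => S) = ∅ := Finset.card_eq_zero.mp h1.2
        apply Finset.Subset.antisymm
        · exact Finset.sdiff_eq_empty_iff_subset.mp e1
        · exact Finset.sdiff_eq_empty_iff_subset.mp e2
      · exact h
    omega
  rw [hzero]
  push_cast
  rw [mul_zero]
  exact_mod_cast hpos
end

section
/- For approval elections with m ≥ 3 alternatives, k ∈ {1,…,m−2}, and n ≥ 6 agents, every strongly group-strategyproof multi-winner approval-based voting rule fails to achieve any finite approximation ratio for the k-minimax objective D(C,P) = max_i d(C,P_i). -/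
namespace SGSPImpossible

variable {A : Type*} [DecidableEq A]

lemma hd_self (X : Finset A) : hd X X = 0 := by simp [hd]

lemma hd_empty_left (X : Finset A) : hd ∅ X = X.card := by simp [hd]

lemma hd_eq_zero {X Y : Finset A} (h : hd X Y = 0) : X = Y := by
  simp only [hd, Nat.add_eq_zero, Finset.card_eq_zero, Finset.sdiff_eq_empty_iff_subset] at h
  exact subset_antisymm h.1 h.2

lemma hd_pos_of_ne {X Y : Finset A} (h : X ≠ Y) : 0 < hd X Y := by
  rcases Nat.eq_zero_or_pos (hd X Y) with h0 | h0
  · exact absurd (hd_eq_zero h0) h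
  · exact h0

lemma card_decomp (X Y : Finset A) : (X \ Y).card + (X ∩ Y).card = X.card := by
  rw [Finset.card_sdiff_add_card_inter]

lemma one_le_hd_of_card_lt {X Y : Finset A} (h : Y.card < X.card) : 1 ≤ hd X Y := by
  have h1 := card_decomp X Y
  have h2 : (X ∩ Y).card ≤ Y.card := Finset.card_le_card (Finset.inter_subset_right)
  have : 1 ≤ (X \ Y).card := by omega
  simp only [hd]; omega

lemma two_le_hd {X Y : Finset A} (hne : X ≠ Y) (hc : X.card = Y.card) : 2 ≤ hd X Y := by
  have h1 := card_decomp X Y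
  have h2 := card_decomp Y X
  rw [Finset.inter_comm] at h2
  have hp : (X \ Y).card ≠ 0 := by
    intro h0
    rw [Finset.card_eq_zero, Finset.sdiff_eq_empty_iff_subset] at h0
    exact hne (Finset.eq_of_subset_of_card_le h0 (le_of_eq hc.symm))
  simp only [hd]; omega

lemma three_le_hd {X Y : Finset A} (hsub : ¬ Y ⊆ X) (hc : X.card = Y.card + 1) :
    3 ≤ hd X Y := by
  have h1 := card_decomp X Y
  have h2 := card_decomp Y X
  rw [Finset.inter_comm] at h2
  have hr : (Y \ X).card ≠ 0 := by
    intro h0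
    rw [Finset.card_eq_zero, Finset.sdiff_eq_empty_iff_subset] at h0
    exact hsub h0
  simp only [hd]; omega

variable {x y z : A} {W : Finset A}

lemma sdiff_letters (hxy : x ≠ y) (hx : x ∉ W) :
    insert x W \ insert y W = {x} := by
  rw [Finset.insert_sdiff_of_notMem _ (by simp [hxy, hx]),
    Finset.sdiff_eq_empty_iff_subset.2 (Finset.subset_insert y W)]
  rfl

lemma hd_letters (hxy : x ≠ y) (hx : x ∉ W) (hy : y ∉ W) :
    hd (insert x W) (insert y W) = 2 := by
  simp [hd, sdiff_letters hxy hx, sdiff_letters hxy.symm hy]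

-- hd (V_{xy}) (W+x) = 1
lemma hd_V_fst (hxy : x ≠ y) (hy : y ∉ W) :
    hd (insert x (insert y W)) (insert x W) = 1 := by
  have h1 : insert x (insert y W) \ insert x W = {y} := by
    rw [Finset.insert_sdiff_of_mem _ (Finset.mem_insert_self x W)]
    exact sdiff_letters (fun h => hxy h.symm) hy
  have h2 : insert x W \ insert x (insert y W) = ∅ := by
    rw [Finset.sdiff_eq_empty_iff_subset]
    exact Finset.insert_subset_insert x (Finset.subset_insert y W)
  simp [hd, h1, h2]

-- hd (V_{xy}) (W+y) = 1
lemma hd_V_snd (hxy : x ≠ y) (hx : x ∉ W) :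
    hd (insert x (insert y W)) (insert y W) = 1 := by
  have h1 : insert x (insert y W) \ insert y W = {x} := by
    rw [Finset.insert_sdiff_of_notMem _ (by simp [hxy, hx]), Finset.sdiff_self]
    rfl
  have h2 : insert y W \ insert x (insert y W) = ∅ := by
    rw [Finset.sdiff_eq_empty_iff_subset]
    exact Finset.subset_insert x (insert y W)
  simp [hd, h1, h2]

-- hd (V_{xy}) (W+z) = 3
lemma hd_V_third (hxy : x ≠ y) (hxz : x ≠ z) (hyz : y ≠ z)
    (hx : x ∉ W) (hy : y ∉ W) (hz : z ∉ W) :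
    hd (insert x (insert y W)) (insert z W) = 3 := by
  have h1 : insert x (insert y W) \ insert z W = {x, y} := by
    rw [Finset.insert_sdiff_of_notMem _ (by simp [hxz, hx]), sdiff_letters hyz hy]
  have h2 : insert z W \ insert x (insert y W) = {z} := by
    rw [Finset.insert_sdiff_of_notMem _ (by simp [hxz.symm, hyz.symm, hz])]
    rw [Finset.sdiff_eq_empty_iff_subset.2
      ((Finset.subset_insert y W).trans (Finset.subset_insert x _))]
    rfl
  rw [hd, h1, h2, Finset.card_singleton, Finset.card_pair hxy]

-- V_{xy} ∩ V_{xz} = W + x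
lemma V_inter (hyz : y ≠ z) (hyx : y ≠ x) (hzx : z ≠ x) (hy : y ∉ W) (hz : z ∉ W) :
    insert x (insert y W) ∩ insert x (insert z W) = insert x W := by
  ext t
  simp only [Finset.mem_inter, Finset.mem_insert]
  constructor
  · rintro ⟨h1 | h1 | h1, h2 | h2 | h2⟩ <;> subst_vars <;> simp_all
  · rintro (h | h) <;> simp [h]


/-- A profile with three designated ballots in the first three slots and `∅` elsewhere. -/
def prof3 (n : ℕ) {A : Type*} [DecidableEq A] (x y z : Finset A) : Fin n → Finset A := fun i =>
  if (i : ℕ) = 0 then x else if (i : ℕ) = 1 then y else if (i : ℕ) = 2 then z else ∅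

variable {A : Type*} [DecidableEq A]

lemma prof3_at0 {n : ℕ} {x y z : Finset A} {i : Fin n} (h : (i : ℕ) = 0) :
    prof3 n x y z i = x := by simp [prof3, h]

lemma prof3_at1 {n : ℕ} {x y z : Finset A} {i : Fin n} (h : (i : ℕ) = 1) :
    prof3 n x y z i = y := by simp [prof3, h]

lemma prof3_at2 {n : ℕ} {x y z : Finset A} {i : Fin n} (h : (i : ℕ) = 2) :
    prof3 n x y z i = z := by simp [prof3, h]

lemma agree3 {n : ℕ} {x y z x' y' z' : Finset A} {coal : Finset (Fin n)}
    {i0 i1 i2 : Fin n} (hv0 : (i0 : ℕ) = 0) (hv1 : (i1 : ℕ) = 1) (hv2 : (i2 : ℕ) = 2)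
    (h0 : x' = x ∨ i0 ∈ coal) (h1 : y' = y ∨ i1 ∈ coal) (h2 : z' = z ∨ i2 ∈ coal) :
    ∀ i ∉ coal, prof3 n x' y' z' i = prof3 n x y z i := by
  intro i hi
  simp only [prof3]
  split_ifs with e0 e1 e2
  · rcases h0 with h | h
    · exact h
    · exact absurd ((Fin.ext (e0.trans hv0.symm) : i = i0) ▸ hi) (by simp [h])
  · rcases h1 with h | h
    · exact h
    · exact absurd ((Fin.ext (e1.trans hv1.symm) : i = i1) ▸ hi) (by simp [h])
  · rcases h2 with h | h
    · exact h
    · exact absurd ((Fin.ext (e2.trans hv2.symm) : i = i2) ▸ hi) (by simp [h])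
  · rfl

lemma pull_lemma {n k : ℕ} (hn : 6 ≤ n)
    {R : (Fin n → Finset A) → Finset A}
    (hGSP : StronglyGSP R) (hUnan : Unanimous k R) (hcard : ∀ P, (R P).card = k)
    {X x y z C : Finset A} (hX : X.card = k)
    (hC : R (prof3 n x y z) = C)
    (h0 : hd x X ≤ hd x C) (h1 : hd y X ≤ hd y C) (h2 : hd z X ≤ hd z C)
    (hs : hd x X < hd x C ∨ hd y X < hd y C ∨ hd z X < hd z C) : False := by
  have hCk : C.card = k := by rw [← hC]; exact hcard _
  refine hGSP (prof3 n x y z) (fun _ => X) Finset.univ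
    (fun i hi => absurd (Finset.mem_univ i) hi) ⟨?_, ?_⟩
  · intro i _
    rw [hUnan X hX, hC]
    simp only [prof3]
    split_ifs
    · exact h0
    · exact h1
    · exact h2
    · rw [hd_empty_left, hd_empty_left, hX, hCk]
  · rcases hs with h | h | h
    · exact ⟨⟨0, by omega⟩, Finset.mem_univ _, by
        rw [hUnan X hX, hC]; simpa [prof3] using h⟩
    · exact ⟨⟨1, by omega⟩, Finset.mem_univ _, by
        rw [hUnan X hX, hC]; simpa [prof3] using h⟩
    · exact ⟨⟨2, by omega⟩, Finset.mem_univ _, by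
        rw [hUnan X hX, hC]; simpa [prof3] using h⟩

theorem no_unanimous {n k : ℕ} (hn : 6 ≤ n)
    {a b c : A} {W : Finset A}
    (hab : a ≠ b) (hac : a ≠ c) (hbc : b ≠ c)
    (haW : a ∉ W) (hbW : b ∉ W) (hcW : c ∉ W) (hWk : W.card + 1 = k)
    (R : (Fin n → Finset A) → Finset A)
    (hcard : ∀ P, (R P).card = k) (hGSP : StronglyGSP R)
    (hUnan : Unanimous k R) : False := by
  obtain ⟨i0, hv0⟩ : ∃ i : Fin n, (i : ℕ) = 0 := ⟨⟨0, by omega⟩, rfl⟩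
  obtain ⟨i1, hv1⟩ : ∃ i : Fin n, (i : ℕ) = 1 := ⟨⟨1, by omega⟩, rfl⟩
  obtain ⟨i2, hv2⟩ : ∃ i : Fin n, (i : ℕ) = 2 := ⟨⟨2, by omega⟩, rfl⟩
  set SS : Finset A := insert a W with hSSdef
  set TT : Finset A := insert b W with hTTdef
  set UU : Finset A := insert c W with hUUdef
  set Vab : Finset A := insert a (insert b W) with hVabdef
  set Vac : Finset A := insert a (insert c W) with hVacdef
  set Vbc : Finset A := insert b (insert c W) with hVbcdef
  have hSk : SS.card = k := by
    rw [hSSdef, Finset.card_insert_of_notMem haW]; omega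
  have hTk : TT.card = k := by
    rw [hTTdef, Finset.card_insert_of_notMem hbW]; omega
  have hUk : UU.card = k := by
    rw [hUUdef, Finset.card_insert_of_notMem hcW]; omega
  have hVabk : Vab.card = k + 1 := by
    rw [hVabdef, Finset.card_insert_of_notMem (by simp [hab, haW]),
      Finset.card_insert_of_notMem hbW]; omega
  have hVack : Vac.card = k + 1 := by
    rw [hVacdef, Finset.card_insert_of_notMem (by simp [hac, haW]),
      Finset.card_insert_of_notMem hcW]; omega
  have hVbck : Vbc.card = k + 1 := by
    rw [hVbcdef, Finset.card_insert_of_notMem (by simp [hbc, hbW]),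
      Finset.card_insert_of_notMem hcW]; omega
  have dabS : hd Vab SS = 1 := by rw [hVabdef, hSSdef]; exact hd_V_fst hab hbW
  have dabT : hd Vab TT = 1 := by rw [hVabdef, hTTdef]; exact hd_V_snd hab haW
  have dabU : hd Vab UU = 3 := by
    rw [hVabdef, hUUdef]; exact hd_V_third hab hac hbc haW hbW hcW
  have dacS : hd Vac SS = 1 := by rw [hVacdef, hSSdef]; exact hd_V_fst hac hcW
  have dacU : hd Vac UU = 1 := by rw [hVacdef, hUUdef]; exact hd_V_snd hac haW
  have dacT : hd Vac TT = 3 := by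
    rw [hVacdef, hTTdef]; exact hd_V_third hac hab hbc.symm haW hcW hbW
  have dbcT : hd Vbc TT = 1 := by rw [hVbcdef, hTTdef]; exact hd_V_fst hbc hcW
  have dbcU : hd Vbc UU = 1 := by rw [hVbcdef, hUUdef]; exact hd_V_snd hbc hbW
  have dbcS : hd Vbc SS = 3 := by
    rw [hVbcdef, hSSdef]; exact hd_V_third hbc hab.symm hac.symm hbW hcW haW
  have dST : hd SS TT = 2 := by rw [hSSdef, hTTdef]; exact hd_letters hab haW hbW
  have dSU : hd SS UU = 2 := by rw [hSSdef, hUUdef]; exact hd_letters hac haW hcW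
  have dTS : hd TT SS = 2 := by rw [hTTdef, hSSdef]; exact hd_letters hab.symm hbW haW
  have dTU : hd TT UU = 2 := by rw [hTTdef, hUUdef]; exact hd_letters hbc hbW hcW
  have dUS : hd UU SS = 2 := by rw [hUUdef, hSSdef]; exact hd_letters hac.symm hcW haW
  have dUT : hd UU TT = 2 := by rw [hUUdef, hTTdef]; exact hd_letters hbc.symm hcW hbW
  have hIab_ac : Vab ∩ Vac = SS := by
    rw [hVabdef, hVacdef, hSSdef]
    exact V_inter hbc hab.symm hac.symm hbW hcW
  have hIab_bc : Vab ∩ Vbc = TT := by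
    rw [hVabdef, hVbcdef, hTTdef, Finset.insert_comm a b W]
    exact V_inter hac hab hbc.symm haW hcW
  have hIbc_ac : Vbc ∩ Vac = UU := by
    rw [hVbcdef, hVacdef, hUUdef, Finset.insert_comm b c W, Finset.insert_comm a c W]
    exact V_inter hab.symm hbc hac hbW haW
  have hD1 : R (prof3 n Vab TT SS) = SS ∨ R (prof3 n Vab TT SS) = TT := by
    by_contra hcon
    push_neg at hcon
    obtain ⟨hn1, hn2⟩ := hcon
    have hCk : (R (prof3 n Vab TT SS)).card = k := hcard _
    refine pull_lemma (x := Vab) (y := TT) (z := SS) hn hGSP hUnan hcard hSk rfl ?_ ?_ ?_ (Or.inr (Or.inr ?_))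
    · rw [dabS]
      exact one_le_hd_of_card_lt (by rw [hCk, hVabk]; omega)
    · rw [dTS]
      exact two_le_hd (fun h => hn2 h.symm) (by rw [hTk, hCk])
    · rw [hd_self]
      exact Nat.zero_le _
    · rw [hd_self]
      exact hd_pos_of_ne (fun h => hn1 h.symm)

  have hD3 : R (prof3 n Vac UU SS) = SS ∨ R (prof3 n Vac UU SS) = UU := by
    by_contra hcon
    push_neg at hcon
    obtain ⟨hn1, hn2⟩ := hcon
    have hCk : (R (prof3 n Vac UU SS)).card = k := hcard _
    refine pull_lemma (x := Vac) (y := UU) (z := SS) hn hGSP hUnan hcard hSk rfl ?_ ?_ ?_ (Or.inr (Or.inr ?_))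
    · rw [dacS]
      exact one_le_hd_of_card_lt (by rw [hCk, hVack]; omega)
    · rw [dUS]
      exact two_le_hd (fun h => hn2 h.symm) (by rw [hUk, hCk])
    · rw [hd_self]
      exact Nat.zero_le _
    · rw [hd_self]
      exact hd_pos_of_ne (fun h => hn1 h.symm)

  have hD6 : R (prof3 n Vbc UU TT) = TT ∨ R (prof3 n Vbc UU TT) = UU := by
    by_contra hcon
    push_neg at hcon
    obtain ⟨hn1, hn2⟩ := hcon
    have hCk : (R (prof3 n Vbc UU TT)).card = k := hcard _
    refine pull_lemma (x := Vbc) (y := UU) (z := TT) hn hGSP hUnan hcard hTk rfl ?_ ?_ ?_ (Or.inr (Or.inr ?_))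
    · rw [dbcT]
      exact one_le_hd_of_card_lt (by rw [hCk, hVbck]; omega)
    · rw [dUT]
      exact two_le_hd (fun h => hn2 h.symm) (by rw [hUk, hCk])
    · rw [hd_self]
      exact Nat.zero_le _
    · rw [hd_self]
      exact hd_pos_of_ne (fun h => hn1 h.symm)

  have hD2 : R (prof3 n Vac TT Vab) = SS ∨ R (prof3 n Vac TT Vab) = TT := by
    by_contra hcon
    push_neg at hcon
    obtain ⟨hn1, hn2⟩ := hcon
    have hCk : (R (prof3 n Vac TT Vab)).card = k := hcard _
    refine pull_lemma (x := Vac) (y := TT) (z := Vab) hn hGSP hUnan hcard hSk rfl ?_ ?_ ?_ ?_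
    · rw [dacS]
      exact one_le_hd_of_card_lt (by rw [hCk, hVack]; omega)
    · rw [dTS]
      exact two_le_hd (fun h => hn2 h.symm) (by rw [hTk, hCk])
    · rw [dabS]
      exact one_le_hd_of_card_lt (by rw [hCk, hVabk]; omega)
    · by_cases hsub : R (prof3 n Vac TT Vab) ⊆ Vab
      · refine Or.inl ?_
        rw [dacS]
        refine lt_of_lt_of_le (by norm_num) (three_le_hd ?_ (by rw [hVack, hCk]))
        intro h2
        exact hn1 (Finset.eq_of_subset_of_card_le
          (by rw [← hIab_ac]; exact Finset.subset_inter hsub h2) 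
          (le_of_eq (hSk.trans hCk.symm)))
      · refine Or.inr (Or.inr ?_)
        rw [dabS]
        exact lt_of_lt_of_le (by norm_num) (three_le_hd hsub (by rw [hVabk, hCk]))

  have hD4 : R (prof3 n Vac UU Vab) = SS ∨ R (prof3 n Vac UU Vab) = UU := by
    by_contra hcon
    push_neg at hcon
    obtain ⟨hn1, hn2⟩ := hcon
    have hCk : (R (prof3 n Vac UU Vab)).card = k := hcard _
    refine pull_lemma (x := Vac) (y := UU) (z := Vab) hn hGSP hUnan hcard hSk rfl ?_ ?_ ?_ ?_
    · rw [dacS]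
      exact one_le_hd_of_card_lt (by rw [hCk, hVack]; omega)
    · rw [dUS]
      exact two_le_hd (fun h => hn2 h.symm) (by rw [hUk, hCk])
    · rw [dabS]
      exact one_le_hd_of_card_lt (by rw [hCk, hVabk]; omega)
    · by_cases hsub : R (prof3 n Vac UU Vab) ⊆ Vab
      · refine Or.inl ?_
        rw [dacS]
        refine lt_of_lt_of_le (by norm_num) (three_le_hd ?_ (by rw [hVack, hCk]))
        intro h2
        exact hn1 (Finset.eq_of_subset_of_card_le
          (by rw [← hIab_ac]; exact Finset.subset_inter hsub h2) 
          (le_of_eq (hSk.trans hCk.symm)))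
      · refine Or.inr (Or.inr ?_)
        rw [dabS]
        exact lt_of_lt_of_le (by norm_num) (three_le_hd hsub (by rw [hVabk, hCk]))

  have hD7 : R (prof3 n Vbc UU Vab) = TT ∨ R (prof3 n Vbc UU Vab) = UU := by
    by_contra hcon
    push_neg at hcon
    obtain ⟨hn1, hn2⟩ := hcon
    have hCk : (R (prof3 n Vbc UU Vab)).card = k := hcard _
    refine pull_lemma (x := Vbc) (y := UU) (z := Vab) hn hGSP hUnan hcard hTk rfl ?_ ?_ ?_ ?_
    · rw [dbcT]
      exact one_le_hd_of_card_lt (by rw [hCk, hVbck]; omega)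
    · rw [dUT]
      exact two_le_hd (fun h => hn2 h.symm) (by rw [hUk, hCk])
    · rw [dabT]
      exact one_le_hd_of_card_lt (by rw [hCk, hVabk]; omega)
    · by_cases hsub : R (prof3 n Vbc UU Vab) ⊆ Vab
      · refine Or.inl ?_
        rw [dbcT]
        refine lt_of_lt_of_le (by norm_num) (three_le_hd ?_ (by rw [hVbck, hCk]))
        intro h2
        exact hn1 (Finset.eq_of_subset_of_card_le
          (by rw [← hIab_bc]; exact Finset.subset_inter hsub h2) 
          (le_of_eq (hTk.trans hCk.symm)))
      · refine Or.inr (Or.inr ?_)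
        rw [dabT]
        exact lt_of_lt_of_le (by norm_num) (three_le_hd hsub (by rw [hVabk, hCk]))

  have hD8 : R (prof3 n Vbc Vab SS) = SS ∨ R (prof3 n Vbc Vab SS) = TT := by
    by_contra hcon
    push_neg at hcon
    obtain ⟨hn1, hn2⟩ := hcon
    have hCk : (R (prof3 n Vbc Vab SS)).card = k := hcard _
    refine pull_lemma (x := Vbc) (y := Vab) (z := SS) hn hGSP hUnan hcard hTk rfl ?_ ?_ ?_ ?_
    · rw [dbcT]
      exact one_le_hd_of_card_lt (by rw [hCk, hVbck]; omega)
    · rw [dabT]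
      exact one_le_hd_of_card_lt (by rw [hCk, hVabk]; omega)
    · rw [dST]
      exact two_le_hd (fun h => hn1 h.symm) (by rw [hSk, hCk])
    · by_cases hsub : R (prof3 n Vbc Vab SS) ⊆ Vab
      · refine Or.inl ?_
        rw [dbcT]
        refine lt_of_lt_of_le (by norm_num) (three_le_hd ?_ (by rw [hVbck, hCk]))
        intro h2
        exact hn2 (Finset.eq_of_subset_of_card_le
          (by rw [← hIab_bc]; exact Finset.subset_inter hsub h2)
          (le_of_eq (hTk.trans hCk.symm)))
      · refine Or.inr (Or.inl ?_)
        rw [dabT]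
        exact lt_of_lt_of_le (by norm_num) (three_le_hd hsub (by rw [hVabk, hCk]))

  have hD9 : R (prof3 n Vbc Vac SS) = SS ∨ R (prof3 n Vbc Vac SS) = UU := by
    by_contra hcon
    push_neg at hcon
    obtain ⟨hn1, hn2⟩ := hcon
    have hCk : (R (prof3 n Vbc Vac SS)).card = k := hcard _
    refine pull_lemma (x := Vbc) (y := Vac) (z := SS) hn hGSP hUnan hcard hUk rfl ?_ ?_ ?_ ?_
    · rw [dbcU]
      exact one_le_hd_of_card_lt (by rw [hCk, hVbck]; omega)
    · rw [dacU]
      exact one_le_hd_of_card_lt (by rw [hCk, hVack]; omega)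
    · rw [dSU]
      exact two_le_hd (fun h => hn1 h.symm) (by rw [hSk, hCk])
    · by_cases hsub : R (prof3 n Vbc Vac SS) ⊆ Vac
      · refine Or.inl ?_
        rw [dbcU]
        refine lt_of_lt_of_le (by norm_num) (three_le_hd ?_ (by rw [hVbck, hCk]))
        intro h2
        exact hn2 (Finset.eq_of_subset_of_card_le
          (by rw [← hIbc_ac]; exact Finset.subset_inter h2 hsub)
          (le_of_eq (hUk.trans hCk.symm)))
      · refine Or.inr (Or.inl ?_)
        rw [dacU]
        exact lt_of_lt_of_le (by norm_num) (three_le_hd hsub (by rw [hVack, hCk]))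

  have hD10 : R (prof3 n Vbc Vac TT) = TT ∨ R (prof3 n Vbc Vac TT) = UU := by
    by_contra hcon
    push_neg at hcon
    obtain ⟨hn1, hn2⟩ := hcon
    have hCk : (R (prof3 n Vbc Vac TT)).card = k := hcard _
    refine pull_lemma (x := Vbc) (y := Vac) (z := TT) hn hGSP hUnan hcard hUk rfl ?_ ?_ ?_ ?_
    · rw [dbcU]
      exact one_le_hd_of_card_lt (by rw [hCk, hVbck]; omega)
    · rw [dacU]
      exact one_le_hd_of_card_lt (by rw [hCk, hVack]; omega)
    · rw [dTU]
      exact two_le_hd (fun h => hn1 h.symm) (by rw [hTk, hCk])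
    · by_cases hsub : R (prof3 n Vbc Vac TT) ⊆ Vac
      · refine Or.inl ?_
        rw [dbcU]
        refine lt_of_lt_of_le (by norm_num) (three_le_hd ?_ (by rw [hVbck, hCk]))
        intro h2
        exact hn2 (Finset.eq_of_subset_of_card_le
          (by rw [← hIbc_ac]; exact Finset.subset_inter h2 hsub)
          (le_of_eq (hUk.trans hCk.symm)))
      · refine Or.inr (Or.inl ?_)
        rw [dacU]
        exact lt_of_lt_of_le (by norm_num) (three_le_hd hsub (by rw [hVack, hCk]))

  have hD5 : R (prof3 n Vac Vbc Vab) = SS ∨ R (prof3 n Vac Vbc Vab) = TT ∨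
      R (prof3 n Vac Vbc Vab) = UU := by
    by_contra hcon
    push_neg at hcon
    obtain ⟨hnS, hnT, hnU⟩ := hcon
    have hCk : (R (prof3 n Vac Vbc Vab)).card = k := hcard _
    by_cases hsub : R (prof3 n Vac Vbc Vab) ⊆ Vbc
    · have hnac : ¬ R (prof3 n Vac Vbc Vab) ⊆ Vac := by
        intro h2
        exact hnU (Finset.eq_of_subset_of_card_le
          (by rw [← hIbc_ac]; exact Finset.subset_inter hsub h2)
          (le_of_eq (hUk.trans hCk.symm)))
      have hnab : ¬ R (prof3 n Vac Vbc Vab) ⊆ Vab := by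
        intro h2
        exact hnT (Finset.eq_of_subset_of_card_le
          (by rw [← hIab_bc]; exact Finset.subset_inter h2 hsub)
          (le_of_eq (hTk.trans hCk.symm)))
      refine pull_lemma (x := Vac) (y := Vbc) (z := Vab) hn hGSP hUnan hcard hTk rfl ?_ ?_ ?_ (Or.inr (Or.inr ?_))
      · rw [dacT]
        exact three_le_hd hnac (by rw [hVack, hCk])
      · rw [dbcT]
        exact one_le_hd_of_card_lt (by rw [hCk, hVbck]; omega)
      · rw [dabT]
        exact one_le_hd_of_card_lt (by rw [hCk, hVabk]; omega)
      · rw [dabT]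
        exact lt_of_lt_of_le (by norm_num) (three_le_hd hnab (by rw [hVabk, hCk]))
    · refine pull_lemma (x := Vac) (y := Vbc) (z := Vab) hn hGSP hUnan hcard hSk rfl ?_ ?_ ?_ ?_
      · rw [dacS]
        exact one_le_hd_of_card_lt (by rw [hCk, hVack]; omega)
      · rw [dbcS]
        exact three_le_hd hsub (by rw [hVbck, hCk])
      · rw [dabS]
        exact one_le_hd_of_card_lt (by rw [hCk, hVabk]; omega)
      · by_cases hsub2 : R (prof3 n Vac Vbc Vab) ⊆ Vac
        · refine Or.inr (Or.inr ?_)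
          rw [dabS]
          refine lt_of_lt_of_le (by norm_num) (three_le_hd ?_ (by rw [hVabk, hCk]))
          intro h2
          exact hnS (Finset.eq_of_subset_of_card_le
            (by rw [← hIab_ac]; exact Finset.subset_inter h2 hsub2)
            (le_of_eq (hSk.trans hCk.symm)))
        · refine Or.inl ?_
          rw [dacS]
          exact lt_of_lt_of_le (by norm_num) (three_le_hd hsub2 (by rw [hVack, hCk]))

  have hD11 : R (prof3 n Vbc Vac Vab) = SS ∨ R (prof3 n Vbc Vac Vab) = TT ∨
      R (prof3 n Vbc Vac Vab) = UU := by
    by_contra hcon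
    push_neg at hcon
    obtain ⟨hnS, hnT, hnU⟩ := hcon
    have hCk : (R (prof3 n Vbc Vac Vab)).card = k := hcard _
    by_cases hsub : R (prof3 n Vbc Vac Vab) ⊆ Vbc
    · have hnac : ¬ R (prof3 n Vbc Vac Vab) ⊆ Vac := by
        intro h2
        exact hnU (Finset.eq_of_subset_of_card_le
          (by rw [← hIbc_ac]; exact Finset.subset_inter hsub h2)
          (le_of_eq (hUk.trans hCk.symm)))
      have hnab : ¬ R (prof3 n Vbc Vac Vab) ⊆ Vab := by
        intro h2
        exact hnT (Finset.eq_of_subset_of_card_le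
          (by rw [← hIab_bc]; exact Finset.subset_inter h2 hsub)
          (le_of_eq (hTk.trans hCk.symm)))
      refine pull_lemma (x := Vbc) (y := Vac) (z := Vab) hn hGSP hUnan hcard hTk rfl ?_ ?_ ?_ (Or.inr (Or.inr ?_))
      · rw [dbcT]
        exact one_le_hd_of_card_lt (by rw [hCk, hVbck]; omega)
      · rw [dacT]
        exact three_le_hd hnac (by rw [hVack, hCk])
      · rw [dabT]
        exact one_le_hd_of_card_lt (by rw [hCk, hVabk]; omega)
      · rw [dabT]
        exact lt_of_lt_of_le (by norm_num) (three_le_hd hnab (by rw [hVabk, hCk]))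
    · refine pull_lemma (x := Vbc) (y := Vac) (z := Vab) hn hGSP hUnan hcard hSk rfl ?_ ?_ ?_ ?_
      · rw [dbcS]
        exact three_le_hd hsub (by rw [hVbck, hCk])
      · rw [dacS]
        exact one_le_hd_of_card_lt (by rw [hCk, hVack]; omega)
      · rw [dabS]
        exact one_le_hd_of_card_lt (by rw [hCk, hVabk]; omega)
      · by_cases hsub2 : R (prof3 n Vbc Vac Vab) ⊆ Vac
        · refine Or.inr (Or.inr ?_)
          rw [dabS]
          refine lt_of_lt_of_le (by norm_num) (three_le_hd ?_ (by rw [hVabk, hCk]))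
          intro h2
          exact hnS (Finset.eq_of_subset_of_card_le
            (by rw [← hIab_ac]; exact Finset.subset_inter h2 hsub2)
            (le_of_eq (hSk.trans hCk.symm)))
        · refine Or.inr (Or.inl ?_)
          rw [dacS]
          exact lt_of_lt_of_le (by norm_num) (three_le_hd hsub2 (by rw [hVack, hCk]))

  rcases hD1 with h1S | h1T
  · -- Branch 1 : R (Vab,T,S) = S
    have e8T : R (prof3 n Vbc Vab SS) ≠ TT := by
      intro hbad
      refine hGSP (prof3 n Vab TT SS) (prof3 n Vbc Vab SS)
        ({i0, i1} : Finset (Fin n))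
        (agree3 hv0 hv1 hv2 (Or.inr (by simp)) (Or.inr (by simp)) (Or.inl rfl)) ⟨?_, ?_⟩
      · intro i hi
        rw [hbad, h1S]
        simp only [Finset.mem_insert, Finset.mem_singleton] at hi
        rcases hi with rfl | rfl
        · rw [prof3_at0 hv0, dabT, dabS] <;> omega
        · rw [prof3_at1 hv1, hd_self, dTS] <;> omega
      · exact ⟨i1, by simp, by
          rw [hbad, h1S, prof3_at1 hv1, hd_self, dTS]; omega⟩
    have h8 : R (prof3 n Vbc Vab SS) = SS := hD8.resolve_right e8T
    have e11T : R (prof3 n Vbc Vac Vab) ≠ TT := by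
      intro hbad
      refine hGSP (prof3 n Vbc Vac Vab) (prof3 n Vbc Vab SS)
        ({i1, i2} : Finset (Fin n))
        (agree3 hv0 hv1 hv2 (Or.inl rfl) (Or.inr (by simp)) (Or.inr (by simp))) ⟨?_, ?_⟩
      · intro i hi
        rw [h8, hbad]
        simp only [Finset.mem_insert, Finset.mem_singleton] at hi
        rcases hi with rfl | rfl
        · rw [prof3_at1 hv1, dacS, dacT] <;> omega
        · rw [prof3_at2 hv2, dabS, dabT] <;> omega
      · exact ⟨i1, by simp, by
          rw [h8, hbad, prof3_at1 hv1, dacS, dacT]; omega⟩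
    have e11U : R (prof3 n Vbc Vac Vab) ≠ UU := by
      intro hbad
      refine hGSP (prof3 n Vbc Vac Vab) (prof3 n Vbc Vab SS)
        ({i1, i2} : Finset (Fin n))
        (agree3 hv0 hv1 hv2 (Or.inl rfl) (Or.inr (by simp)) (Or.inr (by simp))) ⟨?_, ?_⟩
      · intro i hi
        rw [h8, hbad]
        simp only [Finset.mem_insert, Finset.mem_singleton] at hi
        rcases hi with rfl | rfl
        · rw [prof3_at1 hv1, dacS, dacU] <;> omega
        · rw [prof3_at2 hv2, dabS, dabU] <;> omega
      · exact ⟨i2, by simp, by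
          rw [h8, hbad, prof3_at2 hv2, dabS, dabU]; omega⟩
    have h11 : R (prof3 n Vbc Vac Vab) = SS := by
      rcases hD11 with h | h | h
      · exact h
      · exact absurd h e11T
      · exact absurd h e11U
    have e7U : R (prof3 n Vbc UU Vab) ≠ UU := by
      intro hbad
      refine hGSP (prof3 n Vbc Vac Vab) (prof3 n Vbc UU Vab)
        ({i0, i1} : Finset (Fin n))
        (agree3 hv0 hv1 hv2 (Or.inl rfl) (Or.inr (by simp)) (Or.inl rfl)) ⟨?_, ?_⟩
      · intro i hi
        rw [hbad, h11]
        simp only [Finset.mem_insert, Finset.mem_singleton] at hi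
        rcases hi with rfl | rfl
        · rw [prof3_at0 hv0, dbcU, dbcS] <;> omega
        · rw [prof3_at1 hv1, dacU, dacS] <;> omega
      · exact ⟨i0, by simp, by
          rw [hbad, h11, prof3_at0 hv0, dbcU, dbcS]; omega⟩
    have h7 : R (prof3 n Vbc UU Vab) = TT := hD7.resolve_right e7U
    have e10T : R (prof3 n Vbc Vac TT) ≠ TT := by
      intro hbad
      refine hGSP (prof3 n Vbc Vac Vab) (prof3 n Vbc Vac TT)
        ({i0, i2} : Finset (Fin n))
        (agree3 hv0 hv1 hv2 (Or.inl rfl) (Or.inl rfl) (Or.inr (by simp))) ⟨?_, ?_⟩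
      · intro i hi
        rw [hbad, h11]
        simp only [Finset.mem_insert, Finset.mem_singleton] at hi
        rcases hi with rfl | rfl
        · rw [prof3_at0 hv0, dbcT, dbcS] <;> omega
        · rw [prof3_at2 hv2, dabT, dabS] <;> omega
      · exact ⟨i0, by simp, by
          rw [hbad, h11, prof3_at0 hv0, dbcT, dbcS]; omega⟩
    have h10 : R (prof3 n Vbc Vac TT) = UU := hD10.resolve_left e10T
    have e6U : R (prof3 n Vbc UU TT) ≠ UU := by
      intro hbad
      refine hGSP (prof3 n Vbc UU TT) (prof3 n Vbc UU Vab)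
        ({i2} : Finset (Fin n))
        (agree3 hv0 hv1 hv2 (Or.inl rfl) (Or.inl rfl) (Or.inr (by simp))) ⟨?_, ?_⟩
      · intro i hi
        rw [h7, hbad]
        rw [Finset.mem_singleton] at hi
        subst hi
        rw [prof3_at2 hv2, hd_self, dTU] <;> omega
      · exact ⟨i2, by simp, by
          rw [h7, hbad, prof3_at2 hv2, hd_self, dTU]; omega⟩
    have e6T : R (prof3 n Vbc UU TT) ≠ TT := by
      intro hbad
      refine hGSP (prof3 n Vbc UU TT) (prof3 n Vbc Vac TT)
        ({i1} : Finset (Fin n))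
        (agree3 hv0 hv1 hv2 (Or.inl rfl) (Or.inr (by simp)) (Or.inl rfl)) ⟨?_, ?_⟩
      · intro i hi
        rw [h10, hbad]
        rw [Finset.mem_singleton] at hi
        subst hi
        rw [prof3_at1 hv1, hd_self, dUT] <;> omega
      · exact ⟨i1, by simp, by
          rw [h10, hbad, prof3_at1 hv1, hd_self, dUT]; omega⟩
    rcases hD6 with h | h
    · exact e6T h
    · exact e6U h
  · -- Branch 2 : R (Vab,T,S) = T
    have f2S : R (prof3 n Vac TT Vab) ≠ SS := by
      intro hbad
      refine hGSP (prof3 n Vab TT SS) (prof3 n Vac TT Vab)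
        ({i0, i2} : Finset (Fin n))
        (agree3 hv0 hv1 hv2 (Or.inr (by simp)) (Or.inl rfl) (Or.inr (by simp))) ⟨?_, ?_⟩
      · intro i hi
        rw [hbad, h1T]
        simp only [Finset.mem_insert, Finset.mem_singleton] at hi
        rcases hi with rfl | rfl
        · rw [prof3_at0 hv0, dabS, dabT] <;> omega
        · rw [prof3_at2 hv2, hd_self, dST] <;> omega
      · exact ⟨i2, by simp, by
          rw [hbad, h1T, prof3_at2 hv2, hd_self, dST]; omega⟩
    have h2v : R (prof3 n Vac TT Vab) = TT := hD2.resolve_left f2S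
    have f5S : R (prof3 n Vac Vbc Vab) ≠ SS := by
      intro hbad
      refine hGSP (prof3 n Vac Vbc Vab) (prof3 n Vac TT Vab)
        ({i1} : Finset (Fin n))
        (agree3 hv0 hv1 hv2 (Or.inl rfl) (Or.inr (by simp)) (Or.inl rfl)) ⟨?_, ?_⟩
      · intro i hi
        rw [h2v, hbad]
        rw [Finset.mem_singleton] at hi
        subst hi
        rw [prof3_at1 hv1, dbcT, dbcS] <;> omega
      · exact ⟨i1, by simp, by
          rw [h2v, hbad, prof3_at1 hv1, dbcT, dbcS]; omega⟩
    have f5U : R (prof3 n Vac Vbc Vab) ≠ UU := by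
      intro hbad
      refine hGSP (prof3 n Vac Vbc Vab) (prof3 n Vac TT Vab)
        ({i1, i2} : Finset (Fin n))
        (agree3 hv0 hv1 hv2 (Or.inl rfl) (Or.inr (by simp)) (Or.inl rfl)) ⟨?_, ?_⟩
      · intro i hi
        rw [h2v, hbad]
        simp only [Finset.mem_insert, Finset.mem_singleton] at hi
        rcases hi with rfl | rfl
        · rw [prof3_at1 hv1, dbcT, dbcU] <;> omega
        · rw [prof3_at2 hv2, dabT, dabU] <;> omega
      · exact ⟨i2, by simp, by
          rw [h2v, hbad, prof3_at2 hv2, dabT, dabU]; omega⟩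
    have h5 : R (prof3 n Vac Vbc Vab) = TT := by
      rcases hD5 with h | h | h
      · exact absurd h f5S
      · exact h
      · exact absurd h f5U
    have f4U : R (prof3 n Vac UU Vab) ≠ UU := by
      intro hbad
      refine hGSP (prof3 n Vac Vbc Vab) (prof3 n Vac UU Vab)
        ({i0, i1} : Finset (Fin n))
        (agree3 hv0 hv1 hv2 (Or.inl rfl) (Or.inr (by simp)) (Or.inl rfl)) ⟨?_, ?_⟩
      · intro i hi
        rw [hbad, h5]
        simp only [Finset.mem_insert, Finset.mem_singleton] at hi
        rcases hi with rfl | rfl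
        · rw [prof3_at0 hv0, dacU, dacT] <;> omega
        · rw [prof3_at1 hv1, dbcU, dbcT] <;> omega
      · exact ⟨i0, by simp, by
          rw [hbad, h5, prof3_at0 hv0, dacU, dacT]; omega⟩
    have h4 : R (prof3 n Vac UU Vab) = SS := hD4.resolve_right f4U
    have f8S : R (prof3 n Vbc Vab SS) ≠ SS := by
      intro hbad
      refine hGSP (prof3 n Vbc Vab SS) (prof3 n Vab TT SS)
        ({i0, i1} : Finset (Fin n))
        (agree3 hv0 hv1 hv2 (Or.inr (by simp)) (Or.inr (by simp)) (Or.inl rfl)) ⟨?_, ?_⟩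
      · intro i hi
        rw [h1T, hbad]
        simp only [Finset.mem_insert, Finset.mem_singleton] at hi
        rcases hi with rfl | rfl
        · rw [prof3_at0 hv0, dbcT, dbcS] <;> omega
        · rw [prof3_at1 hv1, dabT, dabS] <;> omega
      · exact ⟨i0, by simp, by
          rw [h1T, hbad, prof3_at0 hv0, dbcT, dbcS]; omega⟩
    have h8v : R (prof3 n Vbc Vab SS) = TT := hD8.resolve_left f8S
    have f9S : R (prof3 n Vbc Vac SS) ≠ SS := by
      intro hbad
      refine hGSP (prof3 n Vbc Vab SS) (prof3 n Vbc Vac SS)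
        ({i1, i2} : Finset (Fin n))
        (agree3 hv0 hv1 hv2 (Or.inl rfl) (Or.inr (by simp)) (Or.inl rfl)) ⟨?_, ?_⟩
      · intro i hi
        rw [hbad, h8v]
        simp only [Finset.mem_insert, Finset.mem_singleton] at hi
        rcases hi with rfl | rfl
        · rw [prof3_at1 hv1, dabS, dabT] <;> omega
        · rw [prof3_at2 hv2, hd_self, dST] <;> omega
      · exact ⟨i2, by simp, by
          rw [hbad, h8v, prof3_at2 hv2, hd_self, dST]; omega⟩
    have h9 : R (prof3 n Vbc Vac SS) = UU := hD9.resolve_left f9S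
    have f3S : R (prof3 n Vac UU SS) ≠ SS := by
      intro hbad
      refine hGSP (prof3 n Vac UU SS) (prof3 n Vbc Vac SS)
        ({i0, i1} : Finset (Fin n))
        (agree3 hv0 hv1 hv2 (Or.inr (by simp)) (Or.inr (by simp)) (Or.inl rfl)) ⟨?_, ?_⟩
      · intro i hi
        rw [h9, hbad]
        simp only [Finset.mem_insert, Finset.mem_singleton] at hi
        rcases hi with rfl | rfl
        · rw [prof3_at0 hv0, dacU, dacS] <;> omega
        · rw [prof3_at1 hv1, hd_self, dUS] <;> omega
      · exact ⟨i1, by simp, by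
          rw [h9, hbad, prof3_at1 hv1, hd_self, dUS]; omega⟩
    have h3 : R (prof3 n Vac UU SS) = UU := hD3.resolve_left f3S
    have f4S : R (prof3 n Vac UU Vab) ≠ SS := by
      intro hbad
      refine hGSP (prof3 n Vac UU SS) (prof3 n Vac UU Vab)
        ({i2} : Finset (Fin n))
        (agree3 hv0 hv1 hv2 (Or.inl rfl) (Or.inl rfl) (Or.inr (by simp))) ⟨?_, ?_⟩
      · intro i hi
        rw [hbad, h3]
        rw [Finset.mem_singleton] at hi
        subst hi
        rw [prof3_at2 hv2, hd_self, dSU] <;> omega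
      · exact ⟨i2, by simp, by
          rw [hbad, h3, prof3_at2 hv2, hd_self, dSU]; omega⟩
    exact f4S h4

end SGSPImpossible

/-- For approval elections with `m ≥ 3` alternatives, `1 ≤ k ≤ m - 2`, and
`n ≥ 6` agents, every strongly GSP multi-winner approval-based voting rule
fails to achieve any finite approximation ratio for `k`-minimax: for every
`ρ ≥ 1` there is a profile `P` with `D(R(P),P) > ρ · min_K D(K,P)`. -/

theorem sgsp_unbounded_minimax {A : Type*} [Fintype A] [DecidableEq A]
    {m n k : ℕ} (hmA : Fintype.card A = m) (hm : 3 ≤ m)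
    (hk1 : 1 ≤ k) (hk2 : k ≤ m - 2) (hn : 6 ≤ n)
    (R : (Fin n → Finset A) → Finset A)
    (hcard : ∀ P, (R P).card = k)
    (hGSP : StronglyGSP R) :
    ∀ ρ : ℝ, 1 ≤ ρ →
      ∃ P : Fin n → Finset A,
        ∀ Kmin : Finset A, Kmin.card = k →
          (∀ K : Finset A, K.card = k → Dmax Kmin P ≤ Dmax K P) →
          (Dmax (R P) P : ℝ) > ρ * (Dmax Kmin P : ℝ) := by
  intro ρ hρ
  by_cases hU : Unanimous k R
  · exfalso
    have hcardA : (Finset.univ : Finset A).card = m := by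
      rw [Finset.card_univ, hmA]
    obtain ⟨W, hWsub, hWcard⟩ :=
      Finset.exists_subset_card_eq (s := (Finset.univ : Finset A)) (n := k - 1)
        (by rw [hcardA]; omega)
    obtain ⟨t, htsub, htcard⟩ :=
      Finset.exists_subset_card_eq (s := (Finset.univ : Finset A) \ W) (n := 3)
        (by rw [Finset.card_sdiff_of_subset hWsub, hcardA, hWcard]; omega)
    obtain ⟨a, b, c, hab, hac, hbc, rfl⟩ := Finset.card_eq_three.mp htcard
    have haW : a ∉ W := by
      intro h
      have h2 := htsub (show a ∈ ({a, b, c} : Finset A) by simp)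
      rw [Finset.mem_sdiff] at h2
      exact h2.2 h
    have hbW : b ∉ W := by
      intro h
      have h2 := htsub (show b ∈ ({a, b, c} : Finset A) by simp)
      rw [Finset.mem_sdiff] at h2
      exact h2.2 h
    have hcW : c ∉ W := by
      intro h
      have h2 := htsub (show c ∈ ({a, b, c} : Finset A) by simp)
      rw [Finset.mem_sdiff] at h2
      exact h2.2 h
    exact SGSPImpossible.no_unanimous hn hab hac hbc haW hbW hcW
      (by omega) R hcard hGSP hU
  · have hU' : ∃ S₀ : Finset A, S₀.card = k ∧ R (fun _ => S₀) ≠ S₀ := by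
      by_contra hcon
      push_neg at hcon
      exact hU fun S hS => hcon S hS
    obtain ⟨S₀, hS₀k, hS₀ne⟩ := hU'
    refine ⟨fun _ => S₀, ?_⟩
    intro Kmin hKk hKopt
    have hDS : Dmax S₀ (fun _ : Fin n => S₀) = 0 := by
      refine Nat.eq_zero_of_le_zero (Finset.sup_le fun i _ => ?_)
      simp [SGSPImpossible.hd_self]
    have hKmin0 : Dmax Kmin (fun _ : Fin n => S₀) = 0 :=
      Nat.eq_zero_of_le_zero (le_trans (hKopt S₀ hS₀k) (le_of_eq hDS))
    have hpos : 0 < Dmax (R (fun _ => S₀)) (fun _ : Fin n => S₀) := by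
      have h1 : 0 < hd (R (fun _ => S₀)) S₀ :=
        SGSPImpossible.hd_pos_of_ne hS₀ne
      have h2 : hd (R (fun _ => S₀)) S₀ ≤
          Dmax (R (fun _ => S₀)) (fun _ : Fin n => S₀) :=
        Finset.le_sup (f := fun i : Fin n => hd (R (fun _ => S₀)) S₀)
          (Finset.mem_univ (⟨0, by omega⟩ : Fin n))
      omega
    rw [hKmin0]
    simp only [Nat.cast_zero, mul_zero, gt_iff_lt]
    exact_mod_cast hpos
end

section
/- For two agents, the serial dictatorship rule — which outputs the size-k committee of minimum Hamming distance from agent 2's ballot among all size-k committees of minimum Hamming distance from agent 1's ballot (ties broken by a fixed linear order) — is strongly group-strategyproof. -/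
/-- For two agents, the serial dictatorship rule — outputting the size-`k`
committee of minimum Hamming distance from agent 2's ballot among all size-`k`
committees of minimum Hamming distance from agent 1's ballot, with ties broken
by a fixed linear order `lo` — is strongly group-strategyproof. -/
theorem serial_dictatorship_two_agents_sgsp
    {A : Type*} [Fintype A] [DecidableEq A] {k : ℕ}
    (hk1 : 1 ≤ k) (hk : k ≤ Fintype.card A)
    (lo : LinearOrder (Finset A))
    (R : (Fin 2 → Finset A) → Finset A)
    (hcard : ∀ P, (R P).card = k)
    (hmin1 : ∀ P K, K.card = k → hd (P 0) (R P) ≤ hd (P 0) K)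
    (hmin2 : ∀ P K, K.card = k → hd (P 0) K = hd (P 0) (R P) →
      hd (P 1) (R P) ≤ hd (P 1) K)
    (htie : ∀ P K, K.card = k → hd (P 0) K = hd (P 0) (R P) →
      hd (P 1) K = hd (P 1) (R P) → lo.le (R P) K) :
    StronglyGSP R := by
  intro P P' S hout
  rintro ⟨hall, i, hiS, hlt⟩
  have h1 : hd (P 0) (R P) ≤ hd (P 0) (R P') := hmin1 P (R P') (hcard P')
  have heq : hd (P 0) (R P') = hd (P 0) (R P) := by
    by_cases h0 : (0 : Fin 2) ∈ S
    · exact le_antisymm (hall 0 h0) h1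
    · have hp : P' 0 = P 0 := hout 0 h0
      have h2 : hd (P' 0) (R P') ≤ hd (P' 0) (R P) := hmin1 P' (R P) (hcard P)
      rw [hp] at h2
      exact le_antisymm h2 h1
  have h3 : hd (P 1) (R P) ≤ hd (P 1) (R P') := hmin2 P (R P') (hcard P') heq
  fin_cases i
  · exact absurd hlt (not_lt.mpr h1)
  · exact absurd hlt (not_lt.mpr h3)
end

section
/- Suppose every agent's ranking profile has the same top alternative a ∈ A. Then in the corresponding approval election of the reduction (agents (i,j) approve the top j alternatives of ≻_i plus all k−1 dummies D), the unique Pareto-efficient size-k committee is D ∪ {a}. -/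
/-- A size-`k` committee is Pareto-efficient for a given profile if no other
size-`k` committee weakly improves every agent and strictly improves some agent. -/
def ParetoOptCommittee {A ι : Type*} [DecidableEq A] (k : ℕ)
    (P : ι → Finset A) (K : Finset A) : Prop :=
  K.card = k ∧
    ¬ ∃ K' : Finset A, K'.card = k ∧
      (∀ i, hd (P i) K' ≤ hd (P i) K) ∧
      (∃ i, hd (P i) K' < hd (P i) K)

lemma hd_sub {A : Type*} [DecidableEq A] {K B : Finset A} (h : K ⊆ B) :
    hd B K = B.card - K.card := by
  unfold hd
  rw [Finset.sdiff_eq_empty_iff_subset.mpr h, Finset.card_empty, Finset.card_sdiff_of_subset h, Nat.add_zero]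

lemma hd_ge {A : Type*} [DecidableEq A] (B K : Finset A) :
    B.card - K.card ≤ hd B K := by
  unfold hd
  have := Finset.le_card_sdiff K B
  omega

lemma hd_eq_zero {A : Type*} [DecidableEq A] {B K : Finset A} (h : hd B K = 0) :
    B = K := by
  unfold hd at h
  have h1 : B \ K = ∅ := Finset.card_eq_zero.mp (by omega)
  have h2 : K \ B = ∅ := Finset.card_eq_zero.mp (by omega)
  exact Finset.Subset.antisymm (Finset.sdiff_eq_empty_iff_subset.mp h1)
    (Finset.sdiff_eq_empty_iff_subset.mp h2)

lemma star_subset {n m k : ℕ} (hm : 0 < m) (σ : Fin n → Equiv.Perm (Fin m)) (a : Fin m)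
    (htop : ∀ i : Fin n, σ i ⟨0, hm⟩ = a) (p : Fin n × Fin (m - 1)) :
    insert (Sum.inl a) (dummies m k) ⊆ redProfile (k := k) σ p := by
  intro x hx
  rcases Finset.mem_insert.mp hx with h | h
  · subst h
    apply Finset.mem_union_left
    exact Finset.mem_image.mpr ⟨⟨0, hm⟩, by simp, by rw [htop]⟩
  · exact Finset.mem_union_right _ h

lemma ballot_zero {n m k : ℕ} (hm : 0 < m) (σ : Fin n → Equiv.Perm (Fin m)) (a : Fin m)
    (htop : ∀ i : Fin n, σ i ⟨0, hm⟩ = a) (i0 : Fin n) (j0 : Fin (m - 1)) (hj : j0.val = 0) :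
    redProfile (k := k) σ (i0, j0) = insert (Sum.inl a) (dummies m k) := by
  unfold redProfile
  have hf : Finset.univ.filter (fun t : Fin m => t.val ≤ (i0, j0).2.val)
      = {(⟨0, hm⟩ : Fin m)} := by
    ext t
    simp [Fin.ext_iff, hj]
  rw [hf, Finset.image_singleton, htop i0]; exact (Finset.insert_eq _ _).symm

/-- If every agent's ranking has the same top alternative `a`, then in the
corresponding approval election of the reduction the unique Pareto-efficient
size-`k` committee is `D ∪ {a}`. -/
theorem unanimous_top_unique_pareto {n m k : ℕ} (hn : 1 ≤ n) (hm : 2 ≤ m) (hk : 1 ≤ k)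
    (σ : Fin n → Equiv.Perm (Fin m)) (a : Fin m)
    (htop : ∀ i : Fin n, σ i ⟨0, by omega⟩ = a) :
    ∀ K : Finset (Fin m ⊕ Fin (k - 1)),
      ParetoOptCommittee k (redProfile σ) K ↔ K = insert (Sum.inl a) (dummies m k) := by
  have hm1 : 0 < m := by omega
  have htop' : ∀ i : Fin n, σ i ⟨0, hm1⟩ = a := htop
  set Kstar := insert (Sum.inl a) (dummies m k) with hKdef
  have hcardK : Kstar.card = k := by
    rw [hKdef, Finset.card_insert_of_notMem (by simp [dummies]), card_dummies]
    omega
  have hsub : ∀ p, Kstar ⊆ redProfile (k := k) σ p := star_subset hm1 σ a htop'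
  have hmin : ∀ p (K' : Finset (Fin m ⊕ Fin (k - 1))), K'.card = k →
      hd (redProfile σ p) Kstar ≤ hd (redProfile σ p) K' := by
    intro p K' hc
    rw [hd_sub (hsub p), hcardK]
    have := hd_ge (redProfile (k := k) σ p) K'
    omega
  intro K
  constructor
  · rintro ⟨hKc, hno⟩
    by_contra hne
    apply hno
    refine ⟨Kstar, hcardK, fun p => hmin p K hKc, ?_⟩
    have hm2 : 0 < m - 1 := by omega
    refine ⟨(⟨0, by omega⟩, ⟨0, hm2⟩), ?_⟩
    have hb : redProfile (k := k) σ (⟨0, by omega⟩, ⟨0, hm2⟩) = Kstar :=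
      ballot_zero hm1 σ a htop' _ _ rfl
    rw [hb]
    have h0 : hd Kstar Kstar = 0 := by simp [hd]
    rw [h0]
    have hne0 : hd Kstar K ≠ 0 := fun h => hne (hd_eq_zero h).symm
    omega
  · rintro rfl
    refine ⟨hcardK, ?_⟩
    rintro ⟨K', hc, hle, p, hlt⟩
    exact absurd (hmin p K' hc) (not_le.mpr hlt)
end

section
/- If a randomized mechanism M for binary classification with shared inputs is a mixture of deterministic strongly GSP mechanisms corresponding (under the identification of k-positive classifiers with size-k committees and labelings with approval ballots) to non-unanimous multi-winner voting rules, then M has unbounded approximation ratio for the global risk: for every ρ ≥ 1 there is a dataset Y with E[L(M(Y,w),Y,w)] > ρ · min_{h∈H} L(h,Y,w). -/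
/-- The global risk of a classifier (identified with the size-`k` set of points
it labels `+`) for a dataset `Y` (each `Y i` is the set of points labeled `+`
by agent `i`) with agent weights `w`: `L(h,Y,w) = Σ_i w_i · ℓ_i(h,Y_i)`, where
`ℓ_i` is the Hamming distance between the labelings. -/
def riskL {A : Type*} [Fintype A] [DecidableEq A] {n : ℕ}
    (w : Fin n → ℝ) (Y : Fin n → Finset A) (h : Finset A) : ℝ :=
  ∑ i, w i * (hd (Y i) h : ℝ)

/-- A randomized classification mechanism that is a mixture (with probabilities
`μ t`) of deterministic strongly GSP mechanisms corresponding to non-unanimous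
multi-winner voting rules has unbounded approximation ratio for the global
risk: for every `ρ ≥ 1` there is a dataset `Y` whose expected risk exceeds
`ρ` times the minimum risk over the concept class of `k`-positive classifiers. -/
theorem randomized_classification_unbounded
    {A : Type*} [Fintype A] [DecidableEq A]
    {m n k s : ℕ} (hmA : Fintype.card A = m) (hm : 3 ≤ m)
    (hk1 : 1 ≤ k) (hk2 : k ≤ m - 2) (hn : 1 ≤ n)
    (w : Fin n → ℝ) (hw : ∀ i, 0 < w i) (hwsum : ∑ i, w i = 1)
    (μ : Fin s → ℝ) (hμ : ∀ t, 0 ≤ μ t) (hμsum : ∑ t, μ t = 1)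
    (R : Fin s → (Fin n → Finset A) → Finset A)
    (hcard : ∀ t P, (R t P).card = k)
    (hGSP : ∀ t, StronglyGSP (R t))
    (hNonUnan : ∀ t, ¬ Unanimous k (R t)) :
    ∀ ρ : ℝ, 1 ≤ ρ →
      ∃ Y : Fin n → Finset A,
        ∀ hOpt : Finset A, hOpt.card = k →
          (∀ h : Finset A, h.card = k → riskL w Y hOpt ≤ riskL w Y h) →
          (∑ t, μ t * riskL w Y (R t Y)) > ρ * riskL w Y hOpt := by
  intro ρ hρ
  -- there is a component with positive probability
  have hts : ∃ t, 0 < μ t := by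
    by_contra h
    push_neg at h
    have hz : ∀ t, μ t = 0 := fun t => le_antisymm (h t) (hμ t)
    rw [Finset.sum_congr rfl (fun t _ => hz t), Finset.sum_const_zero] at hμsum
    norm_num at hμsum
  obtain ⟨t0, ht0⟩ := hts
  -- a set witnessing non-unanimity of R t0
  have hNU := hNonUnan t0
  unfold Unanimous at hNU
  push_neg at hNU
  obtain ⟨S, hSk, hSne⟩ := hNU
  refine ⟨fun _ => S, ?_⟩
  intro hOpt hOptk hOptmin
  have hrisk_nonneg : ∀ h : Finset A, 0 ≤ riskL w (fun _ => S) h := by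
    intro h
    exact Finset.sum_nonneg fun i _ => mul_nonneg (hw i).le (Nat.cast_nonneg _)
  have hrS : riskL w (fun _ => S) S = 0 := by
    simp [riskL, hd]
  have hOpt0 : riskL w (fun _ => S) hOpt = 0 := by
    have := hOptmin S hSk
    rw [hrS] at this
    exact le_antisymm this (hrisk_nonneg hOpt)
  rw [hOpt0, mul_zero]
  -- LHS is strictly positive
  have hhd : 0 < hd S (R t0 (fun _ => S)) := by
    rcases Nat.eq_zero_or_pos (hd S (R t0 (fun _ => S))) with h0 | hpos
    · exfalso
      apply hSne
      unfold hd at h0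
      have h1 : (S \ R t0 (fun _ => S)).card = 0 := by omega
      have h2 : (R t0 (fun _ => S) \ S).card = 0 := by omega
      have hsub1 : S ⊆ R t0 (fun _ => S) := by
        rw [← Finset.sdiff_eq_empty_iff_subset]
        exact Finset.card_eq_zero.mp h1
      have hsub2 : R t0 (fun _ => S) ⊆ S := by
        rw [← Finset.sdiff_eq_empty_iff_subset]
        exact Finset.card_eq_zero.mp h2
      exact Finset.Subset.antisymm hsub2 hsub1
    · exact hpos
  have hriskpos : 0 < riskL w (fun _ => S) (R t0 (fun _ => S)) := by
    refine Finset.sum_pos (fun i _ => mul_pos (hw i) ?_) ⟨⟨0, hn⟩, Finset.mem_univ _⟩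
    exact_mod_cast hhd
  have hsingle : μ t0 * riskL w (fun _ => S) (R t0 (fun _ => S)) ≤
      ∑ t, μ t * riskL w (fun _ => S) (R t (fun _ => S)) :=
    Finset.single_le_sum (f := fun t => μ t * riskL w (fun _ => S) (R t (fun _ => S)))
      (fun t _ => mul_nonneg (hμ t) (hrisk_nonneg _)) (Finset.mem_univ t0)
  exact lt_of_lt_of_le (mul_pos ht0 hriskpos) hsingle
end
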